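/- arXiv:2006.06318 — 4 statements merged into one kernel-verified Lean document; each statement's English description precedes it below -/
import Mathlib

section
/- Fix α > −1 and t > 0. Suppose (a_N, b_N) are sequences with 0 < a_N < b_N satisfying the Coulomb-fluid endpoint conditions t(a_N+b_N)/(2 (a_N b_N)^{3/2}) + α/√(a_N b_N) = 1 and (a_N+b_N)/2 − t/√(a_N b_N) − α = 2N, and a_N → 0 as N → ∞. Then there exist a constant C > 0 and N₀ such that for all N ≥ N₀, | a_N − [ t^{2/3}/(2(2N+α)^{1/3}) + α t^{1/3}/(3(2N+α)^{2/3}) + α²/(6(2N+α)) ] | ≤ C (2N+α)^{−4/3}. -/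
open Real Filter MeasureTheory

private lemma mono_aux (α t u x y : ℝ) (ht : 0 < t) (hu : 0 < u)
    (hx : u/2 ≤ x) (hxy : x < y) (hαu : 2*|α| ≤ u) :
    (x^4 - α*x^3 - t^2)*y < (y^4 - α*y^3 - t^2)*x := by
  have hx0 : 0 < x := by linarith
  have hy0 : 0 < y := by linarith
  have h2 : α ≤ |α| := le_abs_self α
  have hb : 0 ≤ (x^2+x*y+y^2) - α*(x+y) := by
    nlinarith [sq_nonneg (x-y), sq_nonneg (x+y), abs_nonneg α]
  have hkey : (y^4 - α*y^3 - t^2)*x - (x^4 - α*x^3 - t^2)*y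
      = (y-x)*((x*y)*((x^2+x*y+y^2) - α*(x+y)) + t^2) := by ring
  have hpos : 0 < (y-x)*((x*y)*((x^2+x*y+y^2) - α*(x+y)) + t^2) := by
    apply mul_pos (by linarith)
    have : 0 ≤ (x*y)*((x^2+x*y+y^2) - α*(x+y)) := mul_nonneg (by positivity) hb
    nlinarith
  linarith

private lemma cube_le (x y : ℝ) (hx : 0 < x) (h : x^3 ≤ y^3) : x ≤ y := by
  by_contra hc
  push_neg at hc
  rcases le_or_gt y 0 with hy | hy
  · have hy3 : y^3 ≤ 0 := by nlinarith [sq_nonneg y]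
    nlinarith [pow_pos hx 3]
  · have := pow_lt_pow_left₀ hc hy.le (by norm_num : (3:ℕ) ≠ 0)
    linarith

private lemma cube_bounds (x M : ℝ) (h1 : -M ≤ x) (h2 : x ≤ M) :
    -(M^3) ≤ x^3 ∧ x^3 ≤ M^3 ∧ x^2 ≤ M^2 := by
  refine ⟨?_, ?_, ?_⟩
  · nlinarith [sq_nonneg (x+M), sq_nonneg (x-M)]
  · nlinarith [sq_nonneg (x+M), sq_nonneg (x-M)]
  · nlinarith

private lemma mul_abs_bound (α x c : ℝ) (h1 : -c ≤ x) (h2 : x ≤ c) :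
    α*x ≤ |α| * c ∧ -(|α| * c) ≤ α*x := by
  rcases abs_cases α with ⟨h,h0⟩|⟨h,h0⟩ <;> constructor <;> nlinarith [abs_nonneg α]

private lemma sq_le_of_between (x c : ℝ) (h1 : -c ≤ x) (h2 : x ≤ c) : x^2 ≤ c^2 := by
  nlinarith

set_option maxHeartbeats 8000000 in
theorem coulomb_fluid_lower_endpoint_asymptotics
    (α t : ℝ) (hα : -1 < α) (ht : 0 < t)
    (a b : ℕ → ℝ)
    (hab : ∀ N : ℕ, 0 < a N ∧ a N < b N)
    (hcond1 : ∀ N : ℕ,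
      t * (a N + b N) / (2 * (a N * b N) ^ ((3 : ℝ) / 2))
        + α / Real.sqrt (a N * b N) = 1)
    (hcond2 : ∀ N : ℕ,
      (a N + b N) / 2 - t / Real.sqrt (a N * b N) - α = 2 * (N : ℝ))
    (ha0 : Tendsto a atTop (nhds 0)) :
    ∃ C : ℝ, 0 < C ∧ ∃ N₀ : ℕ, ∀ N : ℕ, N₀ ≤ N →
      |a N -
          (t ^ ((2 : ℝ) / 3) / (2 * (2 * (N : ℝ) + α) ^ ((1 : ℝ) / 3))
            + α * t ^ ((1 : ℝ) / 3) / (3 * (2 * (N : ℝ) + α) ^ ((2 : ℝ) / 3))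
            + α ^ 2 / (6 * (2 * (N : ℝ) + α)))|
        ≤ C * (2 * (N : ℝ) + α) ^ (-(4 : ℝ) / 3) := by
  -- constants
  set c1 : ℝ := α^2/9 + 1 with hc1def
  set M : ℝ := |α|/3 + c1 with hMdef
  set B0 : ℝ := 3*c1^2 + M^3 + |α| * M^2 + 2*t^2 with hB0def
  set K : ℝ := B0/3 + 1 with hKdef
  set K2 : ℝ := 2*K + 2*|α| * c1/3 + c1^2 with hK2def
  set u0 : ℝ := K + 2*M + 2*|α| + 2 with hu0def
  have hαabs : 0 ≤ |α| := abs_nonneg α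
  have hc1pos : 0 < c1 := by rw [hc1def]; positivity
  have hMpos : 0 < M := by rw [hMdef]; positivity
  clear_value c1
  have hB0pos : 2*t^2 < B0 := by
    rw [hB0def]
    have h1 : 0 < M^3 := by positivity
    have h2 : 0 ≤ |α| * M^2 := mul_nonneg (abs_nonneg α) (sq_nonneg M)
    nlinarith [sq_nonneg c1]
  clear_value M
  have hKpos : 1 ≤ K := by rw [hKdef]; nlinarith [sq_nonneg t]
  clear_value B0
  have hK2pos : 0 < K2 := by
    rw [hK2def]
    have h3 : 0 ≤ 2*|α| * c1/3 := by positivity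
    nlinarith [sq_nonneg c1]
  have hu0lb : K + 2*M + 2*|α| + 2 ≤ u0 := le_of_eq hu0def.symm
  have hu0pos : 0 < u0 := by nlinarith
  clear_value K K2 u0
  set τ : ℝ := t ^ ((1:ℝ)/3) with hτdef
  have hτ : 0 < τ := Real.rpow_pos_of_pos ht _
  have hτ3 : τ^3 = t := by
    rw [hτdef, ← Real.rpow_natCast (t ^ ((1:ℝ)/3)) 3, ← Real.rpow_mul ht.le]
    norm_num
  clear_value τ
  set C : ℝ := (9*τ^5 + K2/2)/τ with hCdef
  have hCpos : 0 < C := by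
    rw [hCdef]
    apply div_pos _ hτ
    have h5 : 0 < τ^5 := by positivity
    linarith
  clear_value C
  set n0 : ℝ := u0^3/t + 8*t + 1 with hn0def
  have hu0t : 0 < u0^3/t := by positivity
  have hn0fact : u0^3/t + 8*t + 1 ≤ n0 := le_of_eq hn0def.symm
  clear_value n0
  obtain ⟨N₀, hN₀⟩ := exists_nat_ge ((n0 - α)/2)
  refine ⟨C, hCpos, N₀, fun N hN => ?_⟩
  set n : ℝ := 2 * (N:ℝ) + α with hndef
  have hnn0 : n0 ≤ n := by
    have h1 : (N₀:ℝ) ≤ N := Nat.cast_le.2 hN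
    rw [hndef]; linarith [hN₀]
  have hn1 : 1 ≤ n := by linarith [hnn0, hn0fact, hu0t, ht]
  have hn8t : 8*t ≤ n := by linarith [hnn0, hn0fact, hu0t]
  have hnpos : 0 < n := by linarith
  set ν : ℝ := n ^ ((1:ℝ)/3) with hνdef
  have hν : 0 < ν := Real.rpow_pos_of_pos hnpos _
  have hν3 : ν^3 = n := by
    rw [hνdef, ← Real.rpow_natCast (n ^ ((1:ℝ)/3)) 3, ← Real.rpow_mul hnpos.le]
    norm_num
  have hν1 : 1 ≤ ν := by
    by_contra hc
    push_neg at hc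
    have := pow_lt_one₀ hν.le hc (by norm_num : (3:ℕ) ≠ 0)
    linarith [hν3, hn1]
  set u : ℝ := τ * ν with hudef
  have hupos : 0 < u := mul_pos hτ hν
  have hu3 : u^3 = t*n := by rw [hudef, mul_pow, hτ3, hν3]
  have huu0 : u0 ≤ u := by
    apply cube_le _ _ hu0pos
    rw [hu3]
    have h1 : t*n0 ≤ t*n := mul_le_mul_of_nonneg_left hnn0 ht.le
    have h4 := mul_le_mul_of_nonneg_left hn0fact ht.le
    have h5 : t*(u0^3/t + 8*t + 1) = u0^3 + 8*t^2 + t := by field_simp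
    linarith [sq_nonneg t, ht]
  -- basic u facts
  have hu1 : 1 ≤ u := by linarith
  have hu2α : 2*|α| ≤ u := by linarith
  have huK : K ≤ u := by linarith
  have hu2M : 2*M + 1 ≤ u := by linarith
  have hune : u ≠ 0 := ne_of_gt hupos
  have hu3pos : 0 < u^3 := pow_pos hupos 3
  -- per N quantities
  obtain ⟨hA, hABlt⟩ := hab N
  have hB : 0 < b N := lt_trans hA hABlt
  have hABpos : 0 < a N * b N := mul_pos hA hB
  set s : ℝ := Real.sqrt (a N * b N) with hsdef
  have hs : 0 < s := Real.sqrt_pos.2 hABpos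
  have hsne : s ≠ 0 := ne_of_gt hs
  have hs2 : s^2 = a N * b N := Real.sq_sqrt hABpos.le
  have h32 : (a N * b N) ^ ((3:ℝ)/2) = s^3 := by
    rw [show ((3:ℝ)/2) = (1/2)*3 by norm_num, Real.rpow_mul hABpos.le,
      ← Real.sqrt_eq_rpow, ← hsdef, ← Real.rpow_natCast s 3]
    norm_num
  clear_value s
  have h1 := hcond1 N
  rw [h32, ← hsdef] at h1
  have E1 : t*(a N + b N)*s + 2*α*s^3 = 2*s^4 := by
    field_simp at h1
    linear_combination s*h1
  have h2 := hcond2 N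
  rw [← hsdef] at h2
  have E2 : (a N + b N)*s = 2*n*s + 2*t := by
    have hN2 : (2:ℝ)*(N:ℝ) = n - α := by rw [hndef]; ring
    rw [hN2] at h2
    field_simp at h2
    linarith [h2]
  clear_value n ν
  have key : s^4 = t*n*s + α*s^3 + t^2 := by
    linear_combination (t/2)*E2 - (1/2)*E1
  -- lower bound s ≥ u/2
  have hs_lb : u/2 ≤ s := by
    by_contra hcon
    push_neg at hcon
    have hna : -α ≤ u/2 := by linarith [neg_abs_le α, hu2α, hαabs]
    have hs3 : (0:ℝ) ≤ s^3 := by positivity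
    have i1a : s*s^3 ≤ (u/2)*s^3 := mul_le_mul_of_nonneg_right hcon.le hs3
    have i1b : (-α)*s^3 ≤ (u/2)*s^3 := mul_le_mul_of_nonneg_right hna hs3
    have q1 : s*s ≤ (u/2)*(u/2) := mul_self_le_mul_self hs.le hcon.le
    have q2 : (u*s)*(s*s) ≤ (u*s)*((u/2)*(u/2)) :=
      mul_le_mul_of_nonneg_left q1 (mul_nonneg hupos.le hs.le)
    have h5 : t*n*s = u^3*s := by rw [hu3]
    have h6 : 0 < u^3*s := mul_pos hu3pos hs
    -- key: s^4 - α s^3 = u^3 s + t^2 ; but s^4 - α s^3 ≤ u s^3 ≤ u^3 s/4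
    linarith [key, i1a, i1b, q2, h5, h6, sq_nonneg t]
  -- comparison points
  set rp : ℝ := α^2/(9*u) + K/u^2 with hrpdef
  set mp : ℝ := α/3 + rp with hmpdef
  set wp : ℝ := u + mp with hwpdef
  set rm : ℝ := α^2/(9*u) - K/u^2 with hrmdef
  set mm : ℝ := α/3 + rm with hmmdef
  set wm : ℝ := u + mm with hwmdef
  clear_value rp mp wp rm mm wm
  have hKu2 : K/u^2 ≤ 1/u := by
    rw [div_le_div_iff₀ (by positivity) hupos]
    have h := mul_le_mul_of_nonneg_right huK hupos.le
    linarith [h]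
  have hKu2pos : 0 < K/u^2 := by positivity
  have hc1u : c1/u = α^2/(9*u) + 1/u := by
    rw [hc1def]; field_simp
  have hc1uc1 : c1/u ≤ c1 := by
    rw [div_le_iff₀ hupos]
    have h := mul_le_mul_of_nonneg_left hu1 hc1pos.le
    linarith [h]
  have hα2upos : 0 ≤ α^2/(9*u) := by positivity
  have hrp_ub : rp ≤ c1/u := by rw [hrpdef, hc1u]; linarith
  have hrp_lb : 0 ≤ rp := by rw [hrpdef]; positivity
  have hrm_ub : rm ≤ c1/u := by rw [hrmdef, hc1u]; linarith
  have hrm_lb : -(c1/u) ≤ rm := by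
    rw [hrmdef, hc1u]
    have h1u : 0 < 1/u := by positivity
    linarith
  have hc1upos : 0 < c1/u := by positivity
  have hmp_ub : mp ≤ M := by
    rw [hmpdef, hMdef]
    have : α/3 ≤ |α|/3 := by linarith [le_abs_self α]
    linarith
  have hmp_lb : -M ≤ mp := by
    rw [hmpdef, hMdef]
    have : -(|α|/3) ≤ α/3 := by linarith [neg_abs_le α]
    linarith
  have hmm_ub : mm ≤ M := by
    rw [hmmdef, hMdef]
    have : α/3 ≤ |α|/3 := by linarith [le_abs_self α]
    linarith
  have hmm_lb : -M ≤ mm := by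
    rw [hmmdef, hMdef]
    have : -(|α|/3) ≤ α/3 := by linarith [neg_abs_le α]
    linarith
  have hwp_lb : u/2 ≤ wp := by rw [hwpdef]; linarith
  have hwm_lb : u/2 ≤ wm := by rw [hwmdef]; linarith
  have hwp_pos : 0 < wp := by linarith
  have hwm_pos : 0 < wm := by linarith
  -- bracket identities
  have idp : wp^3 - α*wp^2 - u^3 = 3*K + 3*u*rp^2 + mp^3 - α*mp^2 := by
    rw [hwpdef, hmpdef, hrpdef]; field_simp; ring
  have idm : wm^3 - α*wm^2 - u^3 = -(3*K) + 3*u*rm^2 + mm^3 - α*mm^2 := by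
    rw [hwmdef, hmmdef, hrmdef]; field_simp; ring
  -- cube bounds for mp, mm
  obtain ⟨hmp_cube, hmp_cube2, hmp_sq⟩ := cube_bounds mp M hmp_lb hmp_ub
  obtain ⟨hmm_cube1, hmm_cube, hmm_sq⟩ := cube_bounds mm M hmm_lb hmm_ub
  obtain ⟨hαmp, hαmp2⟩ := mul_abs_bound α (mp^2) (M^2) (by linarith [sq_nonneg mp, sq_nonneg M]) hmp_sq
  obtain ⟨hαmm, hαmm2⟩ := mul_abs_bound α (mm^2) (M^2) (by linarith [sq_nonneg mm, sq_nonneg M]) hmm_sq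
  -- 3K = B0 + 3
  have h3K : 3*K = B0 + 3 := by rw [hKdef]; ring
  -- P1
  have hbrp : 2*t^2 + 3 ≤ 3*K + 3*u*rp^2 + mp^3 - α*mp^2 := by
    have h1 : 0 ≤ 3*u*rp^2 := by positivity
    rw [h3K, hB0def]
    linarith [sq_nonneg c1, hmp_cube, hαmp]
  have P1 : u^3*wp < wp^4 - α*wp^3 - t^2 := by
    have e1 : wp^4 - α*wp^3 - t^2 - u^3*wp = wp*(wp^3 - α*wp^2 - u^3) - t^2 := by ring
    have h2 : (u/2)*(2*t^2+3) ≤ wp*(wp^3 - α*wp^2 - u^3) := by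
      rw [idp]
      apply mul_le_mul hwp_lb hbrp (by positivity) hwp_pos.le
    have h4 : t^2*1 ≤ t^2*u := mul_le_mul_of_nonneg_left hu1 (sq_nonneg t)
    linarith [e1, h2, h4, hu1]
  -- P2
  have hbrm : -(3*K) + 3*u*rm^2 + mm^3 - α*mm^2 ≤ -(2*t^2 + 3) := by
    have h2 : rm^2 ≤ (c1/u)^2 := sq_le_of_between rm (c1/u) hrm_lb hrm_ub
    have h3 : 3*u*rm^2 ≤ 3*u*(c1/u)^2 :=
      mul_le_mul_of_nonneg_left h2 (by positivity)
    have h4 : 3*u*(c1/u)^2 = 3*c1^2/u := by field_simp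
    have h5 : 3*c1^2/u ≤ 3*c1^2 := by
      rw [div_le_iff₀ hupos]
      have h := mul_le_mul_of_nonneg_left hu1 (by positivity : (0:ℝ) ≤ 3*c1^2)
      linarith [h]
    rw [h3K, hB0def]
    linarith [h3, h4, h5, hmm_cube, hαmm2]
  have P2 : wm^4 - α*wm^3 - t^2 < u^3*wm := by
    have e1 : wm^4 - α*wm^3 - t^2 - u^3*wm = wm*(wm^3 - α*wm^2 - u^3) - t^2 := by ring
    have h2 : wm*(wm^3 - α*wm^2 - u^3) ≤ (u/2)*(-(2*t^2+3)) := by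
      rw [idm]
      have hneg : -(3*K) + 3*u*rm^2 + mm^3 - α*mm^2 ≤ 0 := by
        linarith [hbrm, sq_nonneg t]
      calc wm*(-(3*K) + 3*u*rm^2 + mm^3 - α*mm^2)
          ≤ (u/2)*(-(3*K) + 3*u*rm^2 + mm^3 - α*mm^2) :=
            mul_le_mul_of_nonpos_right hwm_lb hneg
        _ ≤ (u/2)*(-(2*t^2+3)) :=
            mul_le_mul_of_nonneg_left hbrm (by linarith)
    have h4 : 0 ≤ u*t^2 := mul_nonneg hupos.le (sq_nonneg t)
    linarith [e1, h2, h4, hupos, sq_nonneg t]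
  -- s between wm and wp
  have hgs : s^4 - α*s^3 - t^2 = u^3*s := by
    linear_combination key - s*hu3
  have hswp : s ≤ wp := by
    by_contra hcon
    push_neg at hcon
    have hm := mono_aux α t u wp s ht hupos hwp_lb hcon hu2α
    rw [hgs] at hm
    have hp := mul_lt_mul_of_pos_right P1 hs
    linarith [hm, hp]
  have hswm : wm ≤ s := by
    by_contra hcon
    push_neg at hcon
    have hm := mono_aux α t u s wm ht hupos hs_lb hcon hu2α
    rw [hgs] at hm
    have hp := mul_lt_mul_of_pos_right P2 hs
    linarith [hm, hp]
  -- s ≤ 2u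
  have hs2u : s ≤ 2*u := by
    have h1 : wp ≤ u + M := by rw [hwpdef]; linarith
    linarith
  -- |s^2 - Q| ≤ K2/u
  have hQp : wp^2 - (u^2 + 2*α*u/3 + α^2/3) = 2*K/u + 2*α*rp/3 + rp^2 := by
    rw [hwpdef, hmpdef, hrpdef]; field_simp; ring
  have hQm : wm^2 - (u^2 + 2*α*u/3 + α^2/3) = -(2*K/u) + 2*α*rm/3 + rm^2 := by
    rw [hwmdef, hmmdef, hrmdef]; field_simp; ring
  obtain ⟨hαrp', hαrp2'⟩ := mul_abs_bound α rp (c1/u) (by linarith) hrp_ub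
  obtain ⟨hαrm', hαrm2'⟩ := mul_abs_bound α rm (c1/u) hrm_lb hrm_ub
  have hrpsq : rp^2 ≤ (c1/u)^2 := sq_le_of_between rp (c1/u) (by linarith) hrp_ub
  have hrmsq : rm^2 ≤ (c1/u)^2 := sq_le_of_between rm (c1/u) hrm_lb hrm_ub
  have hc1squ : (c1/u)^2 ≤ c1^2/u := by
    rw [div_pow, div_le_div_iff₀ (by positivity) hupos]
    have h := mul_le_mul_of_nonneg_left hu1 (by positivity : (0:ℝ) ≤ c1^2*u)
    linarith [h]
  have hαc1div : |α| * (c1/u) = (|α| * c1)/u := by ring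
  have hK2u : K2/u = 2*K/u + 2*(|α| * c1)/(3*u) + c1^2/u := by
    rw [hK2def]; field_simp
  have hsqQub : s^2 ≤ (u^2 + 2*α*u/3 + α^2/3) + K2/u := by
    have h1 : s^2 ≤ wp^2 := pow_le_pow_left₀ hs.le hswp 2
    have h6 : 2*α*rp/3 ≤ 2*(|α| * (c1/u))/3 := by linarith [hαrp']
    have h7 : wp^2 - (u^2 + 2*α*u/3 + α^2/3) ≤ K2/u := by
      rw [hQp, hK2u]
      have : 2*(|α| * (c1/u))/3 = 2*(|α| * c1)/(3*u) := by ring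
      linarith [hrpsq, hc1squ]
    linarith
  have hsqQlb : (u^2 + 2*α*u/3 + α^2/3) - K2/u ≤ s^2 := by
    have h1 : wm^2 ≤ s^2 := pow_le_pow_left₀ hwm_pos.le hswm 2
    have h6 : -(2*(|α| * (c1/u))/3) ≤ 2*α*rm/3 := by linarith [hαrm2']
    have h7 : -(K2/u) ≤ wm^2 - (u^2 + 2*α*u/3 + α^2/3) := by
      rw [hQm, hK2u]
      have he : 2*(|α| * (c1/u))/3 = 2*(|α| * c1)/(3*u) := by ring
      have h8 : 0 ≤ c1^2/u := by positivity
      linarith [sq_nonneg rm]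
    linarith
  -- sum and bounds for a N
  have hsum : (a N + b N) = 2*n + 2*t/s := by
    field_simp
    linear_combination E2
  have htspos : 0 < t/s := by positivity
  have h2un : 2*u ≤ n := by
    apply cube_le _ _ (by linarith)
    have he : (2*u)^3 = 8*(t*n) := by rw [← hu3]; ring
    rw [he]
    have p1 : (8*t)*n ≤ n*n := mul_le_mul_of_nonneg_right hn8t hnpos.le
    have p2 : (n*n)*1 ≤ (n*n)*n := mul_le_mul_of_nonneg_left hn1 (by positivity)
    linarith [p1, p2]
  have hsuml : 2*n ≤ a N + b N := by rw [hsum]; linarith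
  have haslt : a N < s := by
    by_contra hcc
    push_neg at hcc
    have h1 : a N * a N < a N * b N := mul_lt_mul_of_pos_left hABlt hA
    have h2' : s*s ≤ a N * a N := mul_self_le_mul_self hs.le hcc
    linarith [hs2, h1, h2']
  have hbn : n ≤ b N := by linarith [hsuml, haslt, hs2u, h2un]
  have ha_ub : a N * n ≤ 4*u^2 := by
    have h1 : a N * n ≤ a N * b N := mul_le_mul_of_nonneg_left hbn hA.le
    have h5 : s*s ≤ (2*u)*(2*u) := mul_self_le_mul_self hs.le hs2u
    linarith [h1, hs2, h5]
  -- the three estimates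
  have hP2n : 0 < a N + b N := add_pos hA hB
  have hne2 : a N + b N ≠ 0 := ne_of_gt hP2n
  have d1 : |a N - s^2/(a N + b N)| ≤ 8*u^4/n^3 := by
    have e1 : a N - s^2/(a N + b N) = (a N)^2/(a N + b N) := by
      rw [hs2]; field_simp; ring
    have hnum : 0 ≤ (a N)^2/(a N + b N) := div_nonneg (sq_nonneg _) hP2n.le
    rw [e1, abs_of_nonneg hnum]
    rw [div_le_div_iff₀ hP2n (by positivity)]
    have h1 : (a N * n)^2 ≤ (4*u^2)^2 :=
      pow_le_pow_left₀ (mul_nonneg hA.le hnpos.le) ha_ub 2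
    have h2 : ((a N)^2*n^2)*n ≤ (16*u^4)*n := by
      apply mul_le_mul_of_nonneg_right _ hnpos.le
      have hr1 : (a N * n)^2 = (a N)^2*n^2 := by ring
      have hr2 : ((4:ℝ)*u^2)^2 = 16*u^4 := by ring
      rw [hr1, hr2] at h1
      exact h1
    have h3 : (16*u^4)*n = (8*u^4)*(2*n) := by ring
    have h4 : (8*u^4)*(2*n) ≤ (8*u^4)*(a N + b N) :=
      mul_le_mul_of_nonneg_left hsuml (by positivity)
    calc (a N)^2 * n^3 = ((a N)^2*n^2)*n := by ring
      _ ≤ (16*u^4)*n := h2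
      _ = (8*u^4)*(2*n) := h3
      _ ≤ (8*u^4)*(a N + b N) := h4
      _ = 8*u^4*(a N + b N) := by ring
  have d2 : |s^2/(a N + b N) - s^2/(2*n)| ≤ t*u/n^2 := by
    have e1 : s^2/(a N + b N) - s^2/(2*n) = -(s*t)/(n*(a N + b N)) := by
      rw [hsum]
      rw [div_sub_div _ _ (by positivity : 2*n + 2*t/s ≠ 0) (by positivity : 2*n ≠ 0),
        div_eq_div_iff (by positivity : (2*n + 2*t/s)*(2*n) ≠ 0) (by
          have : 0 < n*(2*n + 2*t/s) := by positivity
          exact ne_of_gt this)]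
      field_simp
      ring
    rw [e1, neg_div, abs_neg, abs_of_nonneg (by positivity)]
    rw [div_le_div_iff₀ (by positivity) (by positivity)]
    have h1 : (s*t)*n^2 ≤ ((2*u)*t)*n^2 := by
      apply mul_le_mul_of_nonneg_right _ (by positivity)
      exact mul_le_mul_of_nonneg_right hs2u ht.le
    have h2 : (t*u)*(n*(2*n)) ≤ (t*u)*(n*(a N + b N)) := by
      apply mul_le_mul_of_nonneg_left _ (by positivity)
      exact mul_le_mul_of_nonneg_left hsuml hnpos.le
    calc (s*t)*n^2 ≤ ((2*u)*t)*n^2 := h1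
      _ = (t*u)*(n*(2*n)) := by ring
      _ ≤ (t*u)*(n*(a N + b N)) := h2
      _ = t*u*(n*(a N + b N)) := by ring
  have d3 : |s^2/(2*n) - (u^2 + 2*α*u/3 + α^2/3)/(2*n)| ≤ K2/(2*n*u) := by
    have e1 : s^2/(2*n) - (u^2 + 2*α*u/3 + α^2/3)/(2*n)
        = (s^2 - (u^2 + 2*α*u/3 + α^2/3))/(2*n) := by ring
    rw [e1, abs_div, abs_of_nonneg (by positivity : (0:ℝ) ≤ 2*n)]
    have h1 : |s^2 - (u^2 + 2*α*u/3 + α^2/3)| ≤ K2/u :=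
      abs_le.2 ⟨by linarith [hsqQlb], by linarith [hsqQub]⟩
    have h2npos : (0:ℝ) < 2*n := by linarith
    calc |s^2 - (u^2 + 2*α*u/3 + α^2/3)|/(2*n) ≤ (K2/u)/(2*n) := by
          rw [div_le_div_iff₀ h2npos h2npos]
          exact mul_le_mul_of_nonneg_right h1 h2npos.le
      _ = K2/(2*n*u) := by rw [div_div, mul_comm u (2*n)]
  -- final assembly
  have tri : |a N - (u^2 + 2*α*u/3 + α^2/3)/(2*n)|
      ≤ 8*u^4/n^3 + t*u/n^2 + K2/(2*n*u) := by
    have h := abs_sub_le (a N) (s^2/(a N + b N)) ((u^2 + 2*α*u/3 + α^2/3)/(2*n))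
    have h2' := abs_sub_le (s^2/(a N + b N)) (s^2/(2*n)) ((u^2 + 2*α*u/3 + α^2/3)/(2*n))
    linarith [d1, d2, d3, h, h2']
  have hg1 : t ^ ((2:ℝ)/3) = τ^2 := by
    rw [← hτ3, ← Real.rpow_natCast τ 3, ← Real.rpow_mul hτ.le,
      show ((3:ℕ):ℝ)*((2:ℝ)/3) = ((2:ℕ):ℝ) by norm_num, Real.rpow_natCast]
  have hg4 : n ^ ((2:ℝ)/3) = ν^2 := by
    rw [← hν3, ← Real.rpow_natCast ν 3, ← Real.rpow_mul hν.le,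
      show ((3:ℕ):ℝ)*((2:ℝ)/3) = ((2:ℕ):ℝ) by norm_num, Real.rpow_natCast]
  have hg5 : n ^ (-(4:ℝ)/3) = (ν^4)⁻¹ := by
    rw [← hν3, ← Real.rpow_natCast ν 3, ← Real.rpow_mul hν.le,
      show ((3:ℕ):ℝ)*(-(4:ℝ)/3) = -((4:ℕ):ℝ) by norm_num, Real.rpow_neg hν.le,
      Real.rpow_natCast]
  have hTeq : τ^2/(2*ν) + α*τ/(3*ν^2) + α^2/(6*n)
      = (u^2 + 2*α*u/3 + α^2/3)/(2*n) := by
    rw [hudef, ← hν3]; field_simp; ring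
  have hfin : 8*u^4/n^3 + t*u/n^2 + K2/(2*n*u) ≤ C * (ν^4)⁻¹ := by
    have e1 : 8*u^4/n^3 + t*u/n^2 = 9*τ^4/ν^5 := by
      rw [hudef, ← hν3, ← hτ3]; field_simp; ring
    have e2 : K2/(2*n*u) = (K2/2)/(τ*ν^4) := by
      rw [hudef, ← hν3, div_div]; congr 1; ring
    have e3 : C * (ν^4)⁻¹ = 9*τ^4/ν^4 + (K2/2)/(τ*ν^4) := by
      rw [hCdef]; field_simp
    have h99 : 9*τ^4/ν^5 ≤ 9*τ^4/ν^4 := by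
      rw [div_le_div_iff₀ (pow_pos hν 5) (pow_pos hν 4)]
      have hbase : ν^4*1 ≤ ν^4*ν := mul_le_mul_of_nonneg_left hν1 (pow_nonneg hν.le 4)
      have h9 : (0:ℝ) ≤ 9*τ^4 := by positivity
      have := mul_le_mul_of_nonneg_left hbase h9
      linarith [this]
    linarith
  rw [hg1, hg4, hg5, hTeq]
  exact tri.trans hfin
end

section
/- Fix α > −1, t ≥ 0 and an integer N ≥ 0. The smallest eigenvalue λ_N of the Hankel matrix H_N admits the lower bound λ_N ≥ 2π / Σ_{k=0}^N 𝒦_{kk}, where 𝒦_{kk} := ∫_{−π}^{π} |𝒫_k(e^{iφ})|² dφ and 𝒫_k are the orthonormal polynomials with respect to w_α(x;t). -/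
open Real Filter MeasureTheory intervalIntegral

/-- The singularly perturbed Laguerre weight `w_α(x;t) = x^α e^{-x - t/x}`. -/
noncomputable def pertLaguerreWeight (α t x : ℝ) : ℝ := x ^ α * Real.exp (-x - t / x)

/-- The moments `μ_j(t) = ∫₀^∞ x^j w_α(x;t) dx`. -/
noncomputable def pertLaguerreMoment (α t : ℝ) (j : ℕ) : ℝ :=
  ∫ x in Set.Ioi (0 : ℝ), x ^ j * pertLaguerreWeight α t x

/-- The Hankel matrix `H_N = (μ_{j+k}(t))_{j,k=0}^N`. -/
noncomputable def pertLaguerreHankel (α t : ℝ) (N : ℕ) :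
    Matrix (Fin (N + 1)) (Fin (N + 1)) ℝ :=
  Matrix.of fun j k => pertLaguerreMoment α t ((j : ℕ) + (k : ℕ))

/-- The diagonal entries `𝒦_{kk} = ∫_{-π}^{π} |𝒫_k(e^{iφ})|² dφ`. -/
noncomputable def circleKdiag (P : ℕ → Polynomial ℝ) (k : ℕ) : ℝ :=
  ∫ φ in (-Real.pi)..Real.pi,
    ‖(Polynomial.aeval (Complex.exp (φ * Complex.I))) (P k)‖ ^ 2

/-! ### Auxiliary lemmas -/

lemma weight_integrable_pow (α t : ℝ) (hα : -1 < α) (ht : 0 ≤ t) (n : ℕ) :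
    IntegrableOn (fun x => x ^ n * pertLaguerreWeight α t x) (Set.Ioi (0:ℝ)) := by
  have hn : (0:ℝ) ≤ n := Nat.cast_nonneg n
  have hs : (0:ℝ) < n + α + 1 := by linarith
  have hG := Real.GammaIntegral_convergent hs
  have hG' : IntegrableOn (fun x : ℝ => Real.exp (-x) * x ^ ((n:ℝ) + α)) (Set.Ioi 0) := by
    simpa using hG
  refine hG'.mono' ?_ ?_
  · have : Measurable fun x : ℝ => x ^ n * (x ^ α * Real.exp (-x - t / x)) := by
      fun_prop
    exact this.aestronglyMeasurable
  · rw [ae_restrict_iff' measurableSet_Ioi]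
    filter_upwards with x hx
    have hx0 : (0:ℝ) < x := hx
    have h1 : Real.exp (-x - t / x) ≤ Real.exp (-x) := by
      apply Real.exp_le_exp.2
      have : 0 ≤ t / x := div_nonneg ht hx0.le
      linarith
    have h2 : x ^ n * x ^ α = x ^ ((n:ℝ) + α) := by
      rw [Real.rpow_add hx0, Real.rpow_natCast]
    have hp : 0 ≤ x ^ n * x ^ α := by positivity
    calc ‖x ^ n * pertLaguerreWeight α t x‖
        = x ^ n * x ^ α * Real.exp (-x - t / x) := by
          rw [Real.norm_eq_abs, abs_of_nonneg]
          · ring_nf; rw [pertLaguerreWeight]; ring_nf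
          · rw [pertLaguerreWeight]; positivity
      _ ≤ x ^ n * x ^ α * Real.exp (-x) := by
          exact mul_le_mul_of_nonneg_left h1 hp
      _ = Real.exp (-x) * x ^ ((n:ℝ) + α) := by rw [h2]; ring

lemma weight_integrable_poly (α t : ℝ) (hα : -1 < α) (ht : 0 ≤ t) (p : Polynomial ℝ) :
    IntegrableOn (fun x => p.eval x * pertLaguerreWeight α t x) (Set.Ioi (0:ℝ)) := by
  have : (fun x => p.eval x * pertLaguerreWeight α t x)
      = fun x => ∑ i ∈ p.support, p.coeff i * (x ^ i * pertLaguerreWeight α t x) := by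
    funext x
    rw [Polynomial.eval_eq_sum, Polynomial.sum_def, Finset.sum_mul]
    simp [mul_assoc]
  rw [this]
  exact integrable_finset_sum _ fun i _ =>
    ((weight_integrable_pow α t hα ht i).const_mul _)

/-- Representation in terms of the orthonormal polynomials. -/
lemma exists_repr (P : ℕ → Polynomial ℝ)
    (hdeg : ∀ n : ℕ, (P n).degree = n) (hlead : ∀ n : ℕ, 0 < (P n).leadingCoeff) :
    ∀ (n : ℕ) (q : Polynomial ℝ), q.degree < n →
      ∃ c : ℕ → ℝ, q = ∑ k ∈ Finset.range n, Polynomial.C (c k) * P k := by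
  intro n
  induction n with
  | zero =>
    intro q hq
    refine ⟨0, ?_⟩
    simp only [Finset.range_zero, Finset.sum_empty]
    by_contra h
    exact absurd hq (not_lt.2 (le_trans (by norm_num) (Polynomial.zero_le_degree_iff.2 h)))
  | succ n ih =>
    intro q hq
    have hqn : q.degree ≤ n := by
      exact Order.le_of_lt_succ (by exact_mod_cast hq)
    have hPn : (P n).natDegree = n := Polynomial.natDegree_eq_of_degree_eq_some (hdeg n)
    have hPc : (P n).coeff n ≠ 0 := by
      rw [show (P n).coeff n = (P n).leadingCoeff by rw [Polynomial.leadingCoeff, hPn]]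
      exact (hlead n).ne'
    set a := q.coeff n / (P n).coeff n with ha
    set r := q - Polynomial.C a * P n with hr
    have hrd : r.degree < n := by
      rw [Polynomial.degree_lt_iff_coeff_zero]
      intro m hm
      rcases eq_or_lt_of_le hm with hmn | hmn
      · subst hmn
        simp only [hr, Polynomial.coeff_sub, Polynomial.coeff_C_mul, ha]
        field_simp; ring
      · have hmn' : (n:ℕ) < m := hmn
        have h1 : q.coeff m = 0 := Polynomial.coeff_eq_zero_of_degree_lt
          (lt_of_le_of_lt hqn (by exact_mod_cast hmn'))
        have h2 : (Polynomial.C a * P n).coeff m = 0 := by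
          apply Polynomial.coeff_eq_zero_of_degree_lt
          calc (Polynomial.C a * P n).degree ≤ (P n).degree := by
                by_cases h0 : a = 0
                · simp [h0]
                · rw [Polynomial.degree_C_mul h0]
            _ < m := by rw [hdeg n]; exact_mod_cast hmn'
        simp [hr, h1, h2]
    obtain ⟨c, hc⟩ := ih r hrd
    refine ⟨Function.update c n a, ?_⟩
    rw [Finset.sum_range_succ, Function.update_self]
    have : ∑ k ∈ Finset.range n, Polynomial.C (Function.update c n a k) * P k
        = ∑ k ∈ Finset.range n, Polynomial.C (c k) * P k := by
      apply Finset.sum_congr rfl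
      intro k hk
      rw [Function.update_of_ne (Finset.mem_range.1 hk).ne]
    rw [this, ← hc, hr]
    ring

lemma integral_eval_sum_mul {ι : Type*} (α t : ℝ) (hα : -1 < α) (ht : 0 ≤ t)
    (s : Finset ι) (a : ι → ℝ) (p : ι → Polynomial ℝ) :
    (∫ x in Set.Ioi (0:ℝ),
        (∑ i ∈ s, a i * (p i).eval x) * (∑ j ∈ s, a j * (p j).eval x)
          * pertLaguerreWeight α t x)
      = ∑ i ∈ s, ∑ j ∈ s, a i * a j *
          ∫ x in Set.Ioi (0:ℝ), (p i).eval x * (p j).eval x * pertLaguerreWeight α t x := by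
  have key : ∀ x : ℝ,
      (∑ i ∈ s, a i * (p i).eval x) * (∑ j ∈ s, a j * (p j).eval x) * pertLaguerreWeight α t x
      = ∑ i ∈ s, ∑ j ∈ s, a i * a j *
          ((p i).eval x * (p j).eval x * pertLaguerreWeight α t x) := by
    intro x
    rw [Finset.sum_mul_sum, Finset.sum_mul]
    apply Finset.sum_congr rfl; intro i _
    rw [Finset.sum_mul]
    apply Finset.sum_congr rfl; intro j _
    ring
  simp_rw [key]
  have hint : ∀ i j : ι, IntegrableOn
      (fun x => a i * a j * ((p i).eval x * (p j).eval x * pertLaguerreWeight α t x))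
      (Set.Ioi (0:ℝ)) := by
    intro i j
    have := (weight_integrable_poly α t hα ht (p i * p j)).const_mul (a i * a j)
    unfold IntegrableOn
    simpa [mul_assoc, Polynomial.eval_mul] using this
  rw [integral_finset_sum s fun i _ => integrable_finset_sum s fun j _ => hint i j]
  apply Finset.sum_congr rfl; intro i _
  rw [integral_finset_sum s fun j _ => hint i j]
  apply Finset.sum_congr rfl; intro j _
  exact integral_const_mul _ _

lemma term_re (a b u w : ℝ) :
    (((u:ℂ) * Complex.exp (a * Complex.I)) *
      (starRingEnd ℂ) ((w:ℂ) * Complex.exp (b * Complex.I))).re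
      = u * w * Real.cos (a - b) := by
  rw [map_mul, ← Complex.exp_conj]
  have h1 : (starRingEnd ℂ) ((b:ℂ) * Complex.I) = -((b:ℂ) * Complex.I) := by
    simp [Complex.conj_I]
  rw [h1, Complex.conj_ofReal]
  have h2 : ((u:ℂ) * Complex.exp (a * Complex.I)) * ((w:ℂ) * Complex.exp (-(b * Complex.I)))
      = ((u*w : ℝ) : ℂ) * Complex.exp (((a - b : ℝ):ℂ) * Complex.I) := by
    rw [mul_mul_mul_comm, ← Complex.exp_add]
    push_cast
    ring_nf
  rw [h2, Complex.re_ofReal_mul, Complex.exp_ofReal_mul_I_re]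

lemma norm_sq_sum_exp {n : ℕ} (v : Fin n → ℝ) (φ : ℝ) :
    ‖∑ j : Fin n, (v j : ℂ) * Complex.exp ((((j:ℕ):ℝ) * φ : ℝ) * Complex.I)‖ ^ 2
      = ∑ j : Fin n, ∑ k : Fin n,
          v j * v k * Real.cos ((((j:ℕ):ℝ) * φ) - (((k:ℕ):ℝ) * φ)) := by
  set F := ∑ j : Fin n, (v j : ℂ) * Complex.exp ((((j:ℕ):ℝ) * φ : ℝ) * Complex.I) with hF
  have h0 : ‖F‖ ^ 2 = (F * (starRingEnd ℂ) F).re := by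
    rw [Complex.mul_conj]
    simp [Complex.sq_norm]
  rw [h0, hF, map_sum, Finset.sum_mul_sum, Complex.re_sum]
  apply Finset.sum_congr rfl; intro j _
  rw [Complex.re_sum]
  apply Finset.sum_congr rfl; intro k _
  exact term_re _ _ _ _

lemma integral_cos_diff (j k : ℕ) :
    (∫ φ in (-π)..π, Real.cos (((j:ℝ) - (k:ℝ)) * φ)) = if j = k then 2*π else 0 := by
  by_cases h : j = k
  · subst h
    simp [two_mul]
  · rw [if_neg h]
    have hd : ((j:ℝ) - (k:ℝ)) ≠ 0 := sub_ne_zero.2 (by exact_mod_cast h)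
    rw [intervalIntegral.integral_comp_mul_left Real.cos hd, integral_cos]
    have h1 : Real.sin (((j:ℝ) - (k:ℝ)) * π) = 0 := by
      have := Real.sin_int_mul_pi ((j:ℤ) - (k:ℤ))
      push_cast at this ⊢
      exact this
    have h2 : Real.sin (((j:ℝ) - (k:ℝ)) * -π) = 0 := by
      rw [mul_neg, Real.sin_neg, h1, neg_zero]
    rw [h1, h2]
    simp

lemma parseval (n : ℕ) (v : Fin n → ℝ) :
    (∫ φ in (-π)..π, ‖∑ j : Fin n, (v j : ℂ) * Complex.exp (φ * Complex.I) ^ (j:ℕ)‖ ^ 2)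
      = 2 * π * ∑ j : Fin n, v j ^ 2 := by
  have hpt : ∀ φ : ℝ,
      ‖∑ j : Fin n, (v j : ℂ) * Complex.exp (φ * Complex.I) ^ (j:ℕ)‖ ^ 2
        = ∑ j : Fin n, ∑ k : Fin n,
            v j * v k * Real.cos ((((j:ℕ):ℝ) - ((k:ℕ):ℝ)) * φ) := by
    intro φ
    have he : ∀ j : Fin n, Complex.exp (φ * Complex.I) ^ (j:ℕ)
        = Complex.exp ((((j:ℕ):ℝ) * φ : ℝ) * Complex.I) := by
      intro j
      rw [← Complex.exp_nat_mul]
      push_cast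
      ring_nf
    simp_rw [he]
    rw [norm_sq_sum_exp]
    simp_rw [sub_mul]
  simp_rw [hpt]
  rw [intervalIntegral.integral_finset_sum]
  · have : ∀ j : Fin n, (∫ φ in (-π)..π, ∑ k : Fin n,
        v j * v k * Real.cos ((((j:ℕ):ℝ) - ((k:ℕ):ℝ)) * φ))
        = v j ^ 2 * (2 * π) := by
      intro j
      rw [intervalIntegral.integral_finset_sum]
      · have : ∀ k : Fin n, (∫ φ in (-π)..π,
            v j * v k * Real.cos ((((j:ℕ):ℝ) - ((k:ℕ):ℝ)) * φ))
            = v j * v k * (if (j:ℕ) = (k:ℕ) then 2*π else 0) := by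
          intro k
          rw [intervalIntegral.integral_const_mul, integral_cos_diff]
        simp_rw [this]
        have h2 : ∀ k : Fin n, (v j * v k * if (j:ℕ) = (k:ℕ) then 2*π else 0)
            = if k = j then v j * v k * (2*π) else 0 := by
          intro k
          by_cases hk : k = j
          · subst hk; simp
          · rw [if_neg hk, if_neg (fun h => hk (Fin.ext h.symm)), mul_zero]
        rw [Finset.sum_congr rfl (fun k _ => h2 k),
          Finset.sum_ite_eq' Finset.univ j (fun k => v j * v k * (2*π))]
        simp [sq]
      · intro k _
        apply Continuous.intervalIntegrable
        fun_prop
    simp_rw [this]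
    rw [← Finset.sum_mul]
    ring
  · intro j _
    apply Continuous.intervalIntegrable
    apply continuous_finset_sum
    intro k _
    fun_prop

lemma cont_aeval_circle (p : Polynomial ℝ) :
    Continuous fun φ : ℝ => ‖(Polynomial.aeval (Complex.exp (φ * Complex.I))) p‖ ^ 2 := by
  apply Continuous.pow
  apply Continuous.norm
  exact p.continuous_aeval.comp (by fun_prop)

lemma cs_circle (P : ℕ → Polynomial ℝ) (n : ℕ) (c : ℕ → ℝ) :
    (∫ φ in (-π)..π,
      ‖∑ k ∈ Finset.range n, (c k : ℂ) *
          (Polynomial.aeval (Complex.exp (φ * Complex.I))) (P k)‖ ^ 2)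
    ≤ (∑ k ∈ Finset.range n, c k ^ 2) * ∑ k ∈ Finset.range n, circleKdiag P k := by
  have hpt : ∀ φ : ℝ,
      ‖∑ k ∈ Finset.range n, (c k : ℂ) *
          (Polynomial.aeval (Complex.exp (φ * Complex.I))) (P k)‖ ^ 2
      ≤ (∑ k ∈ Finset.range n, c k ^ 2) *
        ∑ k ∈ Finset.range n,
          ‖(Polynomial.aeval (Complex.exp (φ * Complex.I))) (P k)‖ ^ 2 := by
    intro φ
    set w := fun k => (Polynomial.aeval (Complex.exp (φ * Complex.I))) (P k)
    calc ‖∑ k ∈ Finset.range n, (c k : ℂ) * w k‖ ^ 2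
        ≤ (∑ k ∈ Finset.range n, |c k| * ‖w k‖) ^ 2 := by
          apply pow_le_pow_left₀ (norm_nonneg _)
          refine le_trans (norm_sum_le _ _) ?_
          apply Finset.sum_le_sum
          intro k _
          rw [norm_mul, Complex.norm_real, Real.norm_eq_abs]
      _ ≤ (∑ k ∈ Finset.range n, |c k| ^ 2) * ∑ k ∈ Finset.range n, ‖w k‖ ^ 2 :=
          Finset.sum_mul_sq_le_sq_mul_sq _ _ _
      _ = (∑ k ∈ Finset.range n, c k ^ 2) * ∑ k ∈ Finset.range n, ‖w k‖ ^ 2 := by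
          simp [sq_abs]
  have hintR : ∀ k : ℕ, IntervalIntegrable
      (fun φ : ℝ => ‖(Polynomial.aeval (Complex.exp (φ * Complex.I))) (P k)‖ ^ 2)
      volume (-π) π := fun k => (cont_aeval_circle (P k)).intervalIntegrable _ _
  have hcontL : Continuous fun φ : ℝ =>
      ‖∑ k ∈ Finset.range n, (c k : ℂ) *
          (Polynomial.aeval (Complex.exp (φ * Complex.I))) (P k)‖ ^ 2 := by
    apply Continuous.pow
    apply Continuous.norm
    apply continuous_finset_sum
    intro k _
    exact continuous_const.mul ((P k).continuous_aeval.comp (by fun_prop))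
  calc (∫ φ in (-π)..π,
      ‖∑ k ∈ Finset.range n, (c k : ℂ) *
          (Polynomial.aeval (Complex.exp (φ * Complex.I))) (P k)‖ ^ 2)
      ≤ ∫ φ in (-π)..π, (∑ k ∈ Finset.range n, c k ^ 2) *
          ∑ k ∈ Finset.range n,
            ‖(Polynomial.aeval (Complex.exp (φ * Complex.I))) (P k)‖ ^ 2 := by
        apply intervalIntegral.integral_mono_on (by linarith [Real.pi_pos])
          (hcontL.intervalIntegrable _ _)
          ((continuous_const.mul
            (continuous_finset_sum _ fun k _ => cont_aeval_circle (P k))).intervalIntegrable _ _)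
        intro φ _
        exact hpt φ
    _ = (∑ k ∈ Finset.range n, c k ^ 2) * ∑ k ∈ Finset.range n, circleKdiag P k := by
        rw [intervalIntegral.integral_const_mul,
          intervalIntegral.integral_finset_sum (fun k _ => hintR k)]
        rfl

theorem smallest_eigenvalue_lower_bound
    (α t : ℝ) (hα : -1 < α) (ht : 0 ≤ t) (N : ℕ)
    (P : ℕ → Polynomial ℝ)
    (hdeg : ∀ n : ℕ, (P n).degree = n)
    (hlead : ∀ n : ℕ, 0 < (P n).leadingCoeff)
    (horth : ∀ m n : ℕ,
      (∫ x in Set.Ioi (0 : ℝ), (P m).eval x * (P n).eval x * pertLaguerreWeight α t x)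
        = if m = n then 1 else 0)
    (lam : ℝ)
    (hlam : IsLeast
      {r : ℝ | ∃ v : Fin (N + 1) → ℝ, v ≠ 0 ∧
        (pertLaguerreHankel α t N).mulVec v = r • v} lam) :
    lam ≥ 2 * Real.pi / ∑ k ∈ Finset.range (N + 1), circleKdiag P k := by
  obtain ⟨v, hv, heig⟩ := hlam.1
  set S := ∑ j : Fin (N+1), v j ^ 2 with hS
  have hSpos : 0 < S := by
    obtain ⟨j, hj⟩ := Function.ne_iff.1 hv
    exact Finset.sum_pos' (fun i _ => sq_nonneg _)
      ⟨j, Finset.mem_univ j, sq_pos_of_ne_zero hj⟩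
  -- the polynomial Q with coefficients v
  set Q : Polynomial ℝ := ∑ j : Fin (N+1), Polynomial.C (v j) * Polynomial.X ^ (j:ℕ) with hQ
  have hQeval : ∀ x : ℝ, Q.eval x = ∑ j : Fin (N+1), v j * (Polynomial.X ^ (j:ℕ) : Polynomial ℝ).eval x := by
    intro x
    rw [hQ, Polynomial.eval_finset_sum]
    simp
  -- Step 1 : lam * S = ∫ Q^2 w
  have step1 : lam * S =
      ∫ x in Set.Ioi (0:ℝ), Q.eval x * Q.eval x * pertLaguerreWeight α t x := by
    have hdot : ∑ j : Fin (N+1), v j * ((pertLaguerreHankel α t N).mulVec v j) = lam * S := by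
      rw [heig]
      simp only [Pi.smul_apply, smul_eq_mul, hS, Finset.mul_sum]
      apply Finset.sum_congr rfl; intro j _; ring
    rw [← hdot]
    have hmv : ∀ j, (pertLaguerreHankel α t N).mulVec v j
        = ∑ k : Fin (N+1), pertLaguerreMoment α t ((j:ℕ)+(k:ℕ)) * v k := by
      intro j
      rfl
    simp_rw [hQeval]
    rw [integral_eval_sum_mul α t hα ht Finset.univ v (fun j : Fin (N+1) => Polynomial.X ^ (j:ℕ))]
    apply Finset.sum_congr rfl; intro j _
    rw [hmv, Finset.mul_sum]
    apply Finset.sum_congr rfl; intro k _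
    have : (∫ x in Set.Ioi (0:ℝ),
        (Polynomial.X ^ (j:ℕ) : Polynomial ℝ).eval x * (Polynomial.X ^ (k:ℕ) : Polynomial ℝ).eval x
          * pertLaguerreWeight α t x) = pertLaguerreMoment α t ((j:ℕ)+(k:ℕ)) := by
      rw [pertLaguerreMoment]
      apply MeasureTheory.integral_congr_ae
      filter_upwards with x
      simp [pow_add]
    rw [this]
    ring
  -- Step 2 : representation of Q
  have hQdeg : Q.degree < ((N+1 : ℕ) : WithBot ℕ) := by
    apply lt_of_le_of_lt (Polynomial.degree_sum_le _ _)
    apply Finset.sup_lt_iff (by exact_mod_cast WithBot.bot_lt_coe (N+1)) |>.2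
    intro j _
    apply lt_of_le_of_lt (Polynomial.degree_C_mul_X_pow_le _ _)
    exact_mod_cast Nat.lt_succ_of_le (Nat.lt_succ_iff.1 j.isLt)
  obtain ⟨c, hc⟩ := exists_repr P hdeg hlead (N+1) Q hQdeg
  set C := ∑ k ∈ Finset.range (N+1), c k ^ 2 with hCdef
  -- Step 3 : ∫ Q^2 w = C
  have step3 : (∫ x in Set.Ioi (0:ℝ), Q.eval x * Q.eval x * pertLaguerreWeight α t x) = C := by
    have hQeval' : ∀ x : ℝ, Q.eval x = ∑ k ∈ Finset.range (N+1), c k * (P k).eval x := by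
      intro x
      rw [hc, Polynomial.eval_finset_sum]
      simp
    simp_rw [hQeval']
    rw [integral_eval_sum_mul α t hα ht (Finset.range (N+1)) c P]
    rw [hCdef]
    apply Finset.sum_congr rfl; intro k hk
    rw [Finset.sum_congr rfl (fun l _ => by rw [horth k l])]
    have : ∀ l ∈ Finset.range (N+1), (c k * c l * if k = l then (1:ℝ) else 0)
        = if l = k then c k * c l * 1 else 0 := by
      intro l _
      by_cases h : l = k
      · subst h; simp
      · rw [if_neg (fun hh => h hh.symm), if_neg h, mul_zero]
    rw [Finset.sum_congr rfl this, Finset.sum_ite_eq' (Finset.range (N+1)) k]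
    rw [if_pos hk]
    ring
  -- Step 4 : circle integral of Q, two expressions
  have haeval_v : ∀ φ : ℝ, (Polynomial.aeval (Complex.exp (φ * Complex.I))) Q
      = ∑ j : Fin (N+1), (v j : ℂ) * Complex.exp (φ * Complex.I) ^ (j:ℕ) := by
    intro φ
    rw [hQ, map_sum]
    apply Finset.sum_congr rfl; intro j _
    simp [Polynomial.aeval_C, Complex.coe_algebraMap]
  have haeval_c : ∀ φ : ℝ, (Polynomial.aeval (Complex.exp (φ * Complex.I))) Q
      = ∑ k ∈ Finset.range (N+1), (c k : ℂ) *
          (Polynomial.aeval (Complex.exp (φ * Complex.I))) (P k) := by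
    intro φ
    rw [hc, map_sum]
    apply Finset.sum_congr rfl; intro k _
    simp [Polynomial.aeval_C, Complex.coe_algebraMap]
  have hpar : (∫ φ in (-π)..π, ‖(Polynomial.aeval (Complex.exp (φ * Complex.I))) Q‖ ^ 2)
      = 2 * π * S := by
    simp_rw [haeval_v]
    exact parseval (N+1) v
  have hcs : (∫ φ in (-π)..π, ‖(Polynomial.aeval (Complex.exp (φ * Complex.I))) Q‖ ^ 2)
      ≤ C * ∑ k ∈ Finset.range (N+1), circleKdiag P k := by
    simp_rw [haeval_c]
    exact cs_circle P (N+1) c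
  -- Step 5 : combine
  set K := ∑ k ∈ Finset.range (N+1), circleKdiag P k with hK
  have hmain : 2 * π * S ≤ lam * S * K := by
    rw [← hpar, ← step3, ← step1] at *
    calc (∫ φ in (-π)..π, ‖(Polynomial.aeval (Complex.exp (φ * Complex.I))) Q‖ ^ 2)
        ≤ lam * S * K := hcs
    _ = lam * S * K := rfl
  have hpiS : 0 < 2 * π * S := by
    have := Real.pi_pos
    positivity
  have hlamK : 0 < lam * S * K := lt_of_lt_of_le hpiS hmain
  have hCnonneg : 0 ≤ C := Finset.sum_nonneg fun k _ => sq_nonneg _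
  have hlamnn : 0 ≤ lam := by
    have : lam * S = C := step1.trans step3
    nlinarith
  have hKpos : 0 < K := by
    rcases lt_trichotomy K 0 with h | h | h
    · nlinarith
    · rw [h, mul_zero] at hlamK; exact absurd hlamK (lt_irrefl 0)
    · exact h
  rw [ge_iff_le, div_le_iff₀ hKpos]
  have h2 : 2 * π ≤ lam * K := by
    have := mul_le_mul_of_nonneg_right hmain (le_of_lt (inv_pos.2 hSpos))
    calc 2 * π = 2 * π * S * S⁻¹ := by field_simp
    _ ≤ lam * S * K * S⁻¹ := this
    _ = lam * K := by field_simp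
  linarith
end

section
/- Let 0 < a < b and t ≥ 0. Then ∫_a^b log(x + t) / ( x √((b−x)(x−a)) ) dx = (π/√(ab)) · log[ ( (√(ab) + √((t+a)(t+b)))² − t² ) / (√a + √b)² ]. -/
set_option maxHeartbeats 1000000
open Real MeasureTheory intervalIntegral Set

lemma intA' (c e : ℝ) (he : 0 ≤ e) (hec : e < c) :
    ∫ θ in (-(π/2))..(π/2), (c + e * Real.sin θ)⁻¹ = π / Real.sqrt (c^2 - e^2) := by
  have hc : 0 < c := lt_of_le_of_lt he hec
  set d := Real.sqrt (c^2 - e^2) with hddef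
  have hd2 : d^2 = c^2 - e^2 := Real.sq_sqrt (by nlinarith)
  have hdpos : 0 < d := Real.sqrt_pos.mpr (by nlinarith)
  have hpos : ∀ θ : ℝ, 0 < c + e * Real.sin θ := fun θ => by
    nlinarith [Real.neg_one_le_sin θ, Real.sin_le_one θ]
  set F : ℝ → ℝ := fun θ => 2/d * Real.arctan ((c * Real.tan (θ/2) + e)/d) with hF
  have hderiv : ∀ θ ∈ Set.uIcc (-(π/2)) (π/2), HasDerivAt F ((c + e * Real.sin θ)⁻¹) θ := by
    intro θ hθ
    rw [Set.uIcc_of_le (by linarith [pi_pos])] at hθ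
    have hcos : 0 < Real.cos (θ/2) := by
      apply Real.cos_pos_of_mem_Ioo
      constructor <;> [linarith [hθ.1, pi_pos]; linarith [hθ.2, pi_pos]]
    have h1 : HasDerivAt (fun y : ℝ => Real.tan (y/2)) (1/Real.cos (θ/2)^2 * (1/2)) θ := by
      have := (Real.hasDerivAt_tan hcos.ne').comp θ ((hasDerivAt_id θ).div_const 2)
      simpa [Function.comp_def] using this
    have h2 : HasDerivAt (fun y : ℝ => (c * Real.tan (y/2) + e)/d)
        ((c * (1/Real.cos (θ/2)^2 * (1/2)))/d) θ := ((h1.const_mul c).add_const e).div_const d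
    have h3 : HasDerivAt F
        (2/d * (1/(1 + ((c * Real.tan (θ/2) + e)/d)^2) * ((c * (1/Real.cos (θ/2)^2 * (1/2)))/d))) θ := by
      have := (Real.hasDerivAt_arctan ((c * Real.tan (θ/2) + e)/d)).comp θ h2
      exact this.const_mul (2/d)
    convert h3 using 1
    have hsk : Real.sin (θ/2)^2 + Real.cos (θ/2)^2 = 1 := Real.sin_sq_add_cos_sq _
    have hsin : Real.sin θ = 2 * Real.sin (θ/2) * Real.cos (θ/2) := by
      rw [show θ = 2*(θ/2) by ring, Real.sin_two_mul]; ring_nf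
    rw [Real.tan_eq_sin_div_cos, hsin]
    set s := Real.sin (θ/2)
    set k := Real.cos (θ/2)
    have hne : c + e * (2*s*k) ≠ 0 := by
      have := hpos θ; rw [hsin] at this; exact this.ne'
    field_simp
    rw [div_eq_iff (by convert hne using 1; ring)]
    linear_combination k^2*hd2 + c^2*hsk
  rw [intervalIntegral.integral_eq_sub_of_hasDerivAt hderiv]
  · have htan : Real.tan ((π/2)/2) = 1 := by
      rw [show (π/2)/2 = π/4 by ring, Real.tan_pi_div_four]
    have htan' : Real.tan ((-(π/2))/2) = -1 := by
      rw [show (-(π/2))/2 = -(π/4) by ring, Real.tan_neg, Real.tan_pi_div_four]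
    rw [hF]
    simp only [htan, htan']
    have key : Real.arctan ((c - e)/d) = π/2 - Real.arctan ((c + e)/d) := by
      have h1 : (0:ℝ) < (c + e)/d := by positivity
      have h2 : ((c + e)/d)⁻¹ = (c - e)/d := by
        rw [inv_div]
        rw [div_eq_div_iff (by linarith) hdpos.ne']
        nlinarith [hd2]
      rw [← h2, Real.arctan_inv_of_pos h1]
    have : c * 1 + e = c + e := by ring
    rw [this]
    have : c * (-1) + e = -((c - e)) := by ring
    rw [this, neg_div, Real.arctan_neg, key]
    field_simp
    ring
  · apply Continuous.intervalIntegrable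
    exact Continuous.inv₀ (by continuity) (fun x => (hpos x).ne')


lemma covSin (m r : ℝ) (hr : 0 < r) (g : ℝ → ℝ) :
    ∫ x in Set.Ioo (m - r) (m + r), g x
      = ∫ θ in Set.Ioo (-(π/2)) (π/2), (r * Real.cos θ) * g (m + r * Real.sin θ) := by
  have hmem : ∀ θ ∈ Set.Ioo (-(π/2)) (π/2), θ ∈ Set.Icc (-(π/2)) (π/2) :=
    fun θ hθ => ⟨hθ.1.le, hθ.2.le⟩
  have himg : (fun θ => m + r * Real.sin θ) '' Set.Ioo (-(π/2)) (π/2) = Set.Ioo (m-r) (m+r) := by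
    ext x
    simp only [Set.mem_image, Set.mem_Ioo]
    constructor
    · rintro ⟨θ, ⟨h1, h2⟩, rfl⟩
      have hs1 : Real.sin θ < 1 := by
        have := Real.strictMonoOn_sin ⟨h1.le, h2.le⟩ ⟨by linarith [pi_pos], le_refl _⟩ h2
        simpa using this
      have hs2 : -1 < Real.sin θ := by
        have := Real.strictMonoOn_sin ⟨le_refl _, by linarith [pi_pos]⟩ ⟨h1.le, h2.le⟩ h1
        simpa using this
      constructor <;> nlinarith
    · rintro ⟨hx1, hx2⟩
      have hy1 : -1 < (x - m)/r := by rw [lt_div_iff₀ hr]; linarith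
      have hy2 : (x - m)/r < 1 := by rw [div_lt_one hr]; linarith
      refine ⟨Real.arcsin ((x - m)/r), ⟨Real.neg_pi_div_two_lt_arcsin.mpr hy1,
        Real.arcsin_lt_pi_div_two.mpr hy2⟩, ?_⟩
      rw [Real.sin_arcsin hy1.le hy2.le]
      field_simp
      ring
  have hinj : Set.InjOn (fun θ => m + r * Real.sin θ) (Set.Ioo (-(π/2)) (π/2)) := by
    intro θ₁ h₁ θ₂ h₂ h
    have : Real.sin θ₁ = Real.sin θ₂ := by
      have h' : m + r * Real.sin θ₁ = m + r * Real.sin θ₂ := h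
      exact mul_left_cancel₀ hr.ne' (by linarith)
    exact Real.injOn_sin (hmem _ h₁) (hmem _ h₂) this
  have := MeasureTheory.integral_image_eq_integral_abs_deriv_smul measurableSet_Ioo
    (f' := fun θ => r * Real.cos θ)
    (fun θ _ => (((Real.hasDerivAt_sin θ).const_mul r).const_add m).hasDerivWithinAt) hinj g
  rw [himg] at this
  rw [this]
  apply MeasureTheory.setIntegral_congr_fun measurableSet_Ioo
  intro θ hθ
  simp only [smul_eq_mul]
  rw [abs_of_pos (mul_pos hr (Real.cos_pos_of_mem_Ioo hθ))]

lemma covInv (a b : ℝ) (ha : 0 < a) (hab : a < b) (g : ℝ → ℝ) :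
    ∫ x in Set.Ioo a b, g x = ∫ u in Set.Ioo a b, (a*b/u^2) * g (a*b/u) := by
  have hb : 0 < b := ha.trans hab
  have himg : (fun u => a*b/u) '' Set.Ioo a b = Set.Ioo a b := by
    ext x
    simp only [Set.mem_image, Set.mem_Ioo]
    constructor
    · rintro ⟨u, ⟨h1, h2⟩, rfl⟩
      have hu : 0 < u := ha.trans h1
      constructor
      · rw [lt_div_iff₀ hu]; nlinarith
      · rw [div_lt_iff₀ hu]; nlinarith
    · rintro ⟨hx1, hx2⟩
      have hx : 0 < x := ha.trans hx1
      refine ⟨a*b/x, ⟨?_, ?_⟩, ?_⟩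
      · rw [lt_div_iff₀ hx]; nlinarith
      · rw [div_lt_iff₀ hx]; nlinarith
      · field_simp
  have hinj : Set.InjOn (fun u => a*b/u) (Set.Ioo a b) := by
    intro u₁ h₁ u₂ h₂ h
    have hu₁ : 0 < u₁ := ha.trans h₁.1
    have hu₂ : 0 < u₂ := ha.trans h₂.1
    field_simp at h
    have hab0 : (0:ℝ) < a*b := by positivity
    nlinarith [h]
  have hder : ∀ u ∈ Set.Ioo a b, HasDerivAt (fun u => a*b/u) (-(a*b/u^2)) u := by
    intro u hu
    have hu0 : u ≠ 0 := (ha.trans hu.1).ne'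
    have := (hasDerivAt_inv hu0).const_mul (a*b)
    simp only [div_eq_mul_inv]
    refine this.congr_deriv ?_
    ring
  have := MeasureTheory.integral_image_eq_integral_abs_deriv_smul measurableSet_Ioo
    (f' := fun u => -(a*b/u^2))
    (fun u hu => (hder u hu).hasDerivWithinAt) hinj g
  rw [himg] at this
  rw [this]
  apply MeasureTheory.setIntegral_congr_fun measurableSet_Ioo
  intro u hu
  have hu0 : 0 < u := ha.trans hu.1
  simp only [smul_eq_mul, abs_neg]
  rw [abs_of_pos (by positivity)]


lemma swapHelper (c₁ d₁ c₂ d₂ : ℝ) (f : ℝ → ℝ → ℝ) (hm : Measurable (Function.uncurry f))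
    (M : ℝ) (hb : ∀ θ ∈ Set.Ioo c₁ d₁, ∀ s ∈ Set.Ioo c₂ d₂, |f θ s| ≤ M) :
    ∫ θ in Set.Ioo c₁ d₁, ∫ s in Set.Ioo c₂ d₂, f θ s
      = ∫ s in Set.Ioo c₂ d₂, ∫ θ in Set.Ioo c₁ d₁, f θ s := by
  apply MeasureTheory.integral_integral_swap
  rw [Measure.prod_restrict]
  apply Measure.integrableOn_of_bounded (M := M)
  · rw [Measure.prod_prod]
    exact ENNReal.mul_ne_top (by simp [Real.volume_Ioo]) (by simp [Real.volume_Ioo])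
  · exact hm.aestronglyMeasurable
  · rw [MeasureTheory.ae_restrict_iff' (measurableSet_Ioo.prod measurableSet_Ioo)]
    apply Filter.Eventually.of_forall
    rintro ⟨θ, s⟩ ⟨h1, h2⟩
    exact (Real.norm_eq_abs _).le.trans_eq' rfl |>.trans (hb θ h1 s h2)

lemma logInt (c y u : ℝ) (hu : 0 ≤ u) (hpos : ∀ s ∈ Set.Icc 0 u, 0 < c + s * y) :
    Real.log (c + u * y) - Real.log c = ∫ s in Set.Ioo 0 u, y * (c + s * y)⁻¹ := by
  rw [← MeasureTheory.integral_Ioc_eq_integral_Ioo, ← intervalIntegral.integral_of_le hu]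
  have hder : ∀ s ∈ Set.uIcc 0 u, HasDerivAt (fun s => Real.log (c + s * y)) (y * (c + s * y)⁻¹) s := by
    intro s hs
    rw [Set.uIcc_of_le hu] at hs
    have h1 : HasDerivAt (fun s : ℝ => c + s * y) y s := by
      simpa using ((hasDerivAt_id s).mul_const y).const_add c
    have := (Real.hasDerivAt_log (hpos s hs).ne').comp s h1
    simpa [mul_comm, Function.comp_def] using this
  rw [intervalIntegral.integral_eq_sub_of_hasDerivAt hder]
  · simp
  · apply ContinuousOn.intervalIntegrable
    apply ContinuousOn.mul continuousOn_const
    apply ContinuousOn.inv₀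
    · fun_prop
    · intro s hs
      rw [Set.uIcc_of_le hu] at hs
      exact (hpos s hs).ne'


lemma intA (c e : ℝ) (he : 0 ≤ e) (hec : e < c) :
    ∫ θ in Set.Ioo (-(π/2)) (π/2), (c + e * Real.sin θ)⁻¹ = π / Real.sqrt (c^2 - e^2) := by
  rw [← MeasureTheory.integral_Ioc_eq_integral_Ioo,
    ← intervalIntegral.integral_of_le (by linarith [pi_pos])]
  exact intA' c e he hec

lemma volIoo : (volume (Set.Ioo (-(π/2)) (π/2))).toReal = π := by
  rw [Real.volume_Ioo, ENNReal.toReal_ofReal (by linarith [pi_pos])]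
  ring

lemma integrableOn_Ioo_of_continuous {f : ℝ → ℝ} {c d : ℝ} (hf : Continuous f) :
    IntegrableOn f (Set.Ioo c d) volume :=
  (hf.integrableOn_Icc).mono_set Set.Ioo_subset_Icc_self

lemma lemN (m r : ℝ) (hr : 0 < r) (hrm : r < m) :
    ∫ θ in Set.Ioo (-(π/2)) (π/2), Real.log (m + r * Real.sin θ)
      = π * Real.log ((m + Real.sqrt (m^2 - r^2)) / 2) := by
  have hm : 0 < m := hr.trans hrm
  have hposx : ∀ (s θ : ℝ), s ∈ Set.Icc 0 r → 0 < m + s * Real.sin θ := by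
    intro s θ hs
    nlinarith [Real.neg_one_le_sin θ, Real.sin_le_one θ, hs.1, hs.2]
  have hSpos : 0 < Real.sqrt (m^2 - r^2) := Real.sqrt_pos.mpr (by nlinarith)
  have hS2 : Real.sqrt (m^2 - r^2) ^ 2 = m^2 - r^2 := Real.sq_sqrt (by nlinarith)
  have hcontlog : Continuous (fun θ => Real.log (m + r * Real.sin θ)) := by
    apply Continuous.log (by fun_prop)
    intro θ
    exact (hposx r θ ⟨hr.le, le_refl r⟩).ne'
  -- step 1 : subtract constant
  have key : ∀ θ : ℝ, Real.log (m + r * Real.sin θ) - Real.log m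
      = ∫ s in Set.Ioo 0 r, Real.sin θ * (m + s * Real.sin θ)⁻¹ := by
    intro θ
    exact logInt m (Real.sin θ) r hr.le (fun s hs => hposx s θ hs)
  have hsub : (∫ θ in Set.Ioo (-(π/2)) (π/2), Real.log (m + r * Real.sin θ))
      - π * Real.log m
      = ∫ θ in Set.Ioo (-(π/2)) (π/2), ∫ s in Set.Ioo 0 r,
          Real.sin θ * (m + s * Real.sin θ)⁻¹ := by
    have h1 : (∫ θ in Set.Ioo (-(π/2)) (π/2), Real.log (m + r * Real.sin θ)) - π * Real.log m
        = ∫ θ in Set.Ioo (-(π/2)) (π/2), (Real.log (m + r * Real.sin θ) - Real.log m) := by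
      rw [MeasureTheory.integral_sub (integrableOn_Ioo_of_continuous hcontlog)
        ((integrableOn_const_iff).mpr (Or.inr (by rw [Real.volume_Ioo]; exact ENNReal.ofReal_lt_top)))]
      rw [MeasureTheory.setIntegral_const, smul_eq_mul, measureReal_def, volIoo]
    rw [h1]
    exact MeasureTheory.setIntegral_congr_fun measurableSet_Ioo (fun θ _ => key θ)
  -- step 2 : swap
  have hswap : (∫ θ in Set.Ioo (-(π/2)) (π/2), ∫ s in Set.Ioo 0 r,
        Real.sin θ * (m + s * Real.sin θ)⁻¹)
      = ∫ s in Set.Ioo 0 r, ∫ θ in Set.Ioo (-(π/2)) (π/2),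
          Real.sin θ * (m + s * Real.sin θ)⁻¹ := by
    refine swapHelper _ _ _ _ _ ?_ ((m - r)⁻¹) ?_
    · show Measurable (fun p : ℝ × ℝ => Real.sin p.1 * (m + p.2 * Real.sin p.1)⁻¹)
      exact (Real.measurable_sin.comp measurable_fst).mul
        ((measurable_const.add (measurable_snd.mul
          (Real.measurable_sin.comp measurable_fst))).inv)
    intro θ _ s hs
    have h1 : 0 < m + s * Real.sin θ := hposx s θ ⟨hs.1.le, hs.2.le⟩
    have h2 : m - r ≤ m + s * Real.sin θ := by
      nlinarith [Real.neg_one_le_sin θ, hs.1, hs.2]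
    rw [abs_mul, abs_inv, abs_of_pos h1]
    calc |Real.sin θ| * (m + s * Real.sin θ)⁻¹ ≤ 1 * (m - r)⁻¹ := by
          apply mul_le_mul (Real.abs_sin_le_one θ) _ (by positivity) zero_le_one
          exact inv_anti₀ (by linarith) h2
      _ = (m - r)⁻¹ := one_mul _
  -- step 3 : inner integral evaluates
  have hinner : ∀ s ∈ Set.Ioo (0:ℝ) r,
      (∫ θ in Set.Ioo (-(π/2)) (π/2), Real.sin θ * (m + s * Real.sin θ)⁻¹)
        = -(π * s) / (Real.sqrt (m^2 - s^2) * (Real.sqrt (m^2 - s^2) + m)) := by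
    intro s hs
    have hs0 : 0 < s := hs.1
    have hsr : s < r := hs.2
    have hq : 0 < m^2 - s^2 := by nlinarith
    have hqs : 0 < Real.sqrt (m^2 - s^2) := Real.sqrt_pos.mpr hq
    have hqs2 : Real.sqrt (m^2 - s^2) ^ 2 = m^2 - s^2 := Real.sq_sqrt hq.le
    have hcongr : ∀ θ ∈ Set.Ioo (-(π/2)) (π/2), Real.sin θ * (m + s * Real.sin θ)⁻¹
        = s⁻¹ * (1 - m * (m + s * Real.sin θ)⁻¹) := by
      intro θ _
      have h1 : 0 < m + s * Real.sin θ := hposx s θ ⟨hs0.le, hsr.le⟩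
      field_simp
      rw [eq_sub_iff_add_eq, ← add_div, div_eq_one_iff_eq (by rw [mul_comm]; exact h1.ne')]
      ring
    rw [MeasureTheory.setIntegral_congr_fun measurableSet_Ioo hcongr]
    have hint : IntegrableOn (fun θ => m * (m + s * Real.sin θ)⁻¹)
        (Set.Ioo (-(π/2)) (π/2)) volume := by
      apply integrableOn_Ioo_of_continuous
      apply Continuous.mul continuous_const
      exact Continuous.inv₀ (by fun_prop) (fun θ => (hposx s θ ⟨hs0.le, hsr.le⟩).ne')
    rw [MeasureTheory.integral_const_mul]
    rw [MeasureTheory.integral_sub ((integrableOn_const_iff (C := (1:ℝ))).mpr (Or.inr (by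
      rw [Real.volume_Ioo]; exact ENNReal.ofReal_lt_top))) hint]
    rw [MeasureTheory.setIntegral_const, smul_eq_mul, measureReal_def, volIoo, mul_one,
      MeasureTheory.integral_const_mul, intA m s hs0.le (by linarith)]
    have hne1 : Real.sqrt (m^2 - s^2) ≠ 0 := hqs.ne'
    have hne2 : Real.sqrt (m^2 - s^2) + m ≠ 0 := by positivity
    field_simp
    linear_combination hqs2
  rw [MeasureTheory.setIntegral_congr_fun measurableSet_Ioo hinner] at hswap
  -- step 4 : FTC in s
  have hW : ∀ s ∈ Set.uIcc 0 r, HasDerivAt (fun s => π * Real.log ((m + Real.sqrt (m^2 - s^2))/2))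
      (-(π * s) / (Real.sqrt (m^2 - s^2) * (Real.sqrt (m^2 - s^2) + m))) s := by
    intro s hsI
    rw [Set.uIcc_of_le hr.le] at hsI
    have hq : 0 < m^2 - s^2 := by nlinarith [hsI.1, hsI.2]
    have hqs : 0 < Real.sqrt (m^2 - s^2) := Real.sqrt_pos.mpr hq
    have hqs2 : Real.sqrt (m^2 - s^2) ^ 2 = m^2 - s^2 := Real.sq_sqrt hq.le
    have h1 : HasDerivAt (fun s : ℝ => m^2 - s^2) (-(2*s)) s := by
      simpa using (hasDerivAt_pow 2 s).const_sub (m^2)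
    have h2 : HasDerivAt (fun s : ℝ => Real.sqrt (m^2 - s^2))
        (1 / (2 * Real.sqrt (m^2 - s^2)) * (-(2*s))) s :=
      (Real.hasDerivAt_sqrt hq.ne').comp s h1
    have h3 : HasDerivAt (fun s : ℝ => (m + Real.sqrt (m^2 - s^2))/2)
        ((1 / (2 * Real.sqrt (m^2 - s^2)) * (-(2*s)))/2) s := (h2.const_add m).div_const 2
    have h4 := ((Real.hasDerivAt_log (by positivity : (0:ℝ) < (m + Real.sqrt (m^2 - s^2))/2).ne').comp
      s h3).const_mul π
    refine h4.congr_deriv ?_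
    field_simp
    ring
  have hftc : (∫ s in Set.Ioo (0:ℝ) r,
      -(π * s) / (Real.sqrt (m^2 - s^2) * (Real.sqrt (m^2 - s^2) + m)))
      = π * Real.log ((m + Real.sqrt (m^2 - r^2))/2) - π * Real.log m := by
    rw [← MeasureTheory.integral_Ioc_eq_integral_Ioo, ← intervalIntegral.integral_of_le hr.le]
    rw [intervalIntegral.integral_eq_sub_of_hasDerivAt hW]
    · norm_num
      rw [Real.sqrt_sq hm.le]
      rw [show (m + m)/2 = m by ring]
    · apply ContinuousOn.intervalIntegrable
      apply ContinuousOn.div (by fun_prop)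
      · apply ContinuousOn.mul
        · apply Continuous.continuousOn; fun_prop
        · apply Continuous.continuousOn; fun_prop
      · intro s hsI
        rw [Set.uIcc_of_le hr.le] at hsI
        have hq : 0 < m^2 - s^2 := by nlinarith [hsI.1, hsI.2]
        have hqs : 0 < Real.sqrt (m^2 - s^2) := Real.sqrt_pos.mpr hq
        positivity
  rw [hftc] at hswap
  linarith [hsub, hswap]


lemma volIoo' {c d : ℝ} : volume (Set.Ioo c d) < ⊤ := by
  rw [Real.volume_Ioo]; exact ENNReal.ofReal_lt_top

lemma lemP (a b t : ℝ) (ha : 0 < a) (hab : a < b) (ht : 0 ≤ t) :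
    (∫ θ in Set.Ioo (-(π/2)) (π/2),
        Real.log ((a+b)/2 + (b-a)/2 * Real.sin θ + t) / ((a+b)/2 + (b-a)/2 * Real.sin θ))
      - (∫ θ in Set.Ioo (-(π/2)) (π/2),
        Real.log ((a+b)/2 + (b-a)/2 * Real.sin θ) / ((a+b)/2 + (b-a)/2 * Real.sin θ))
    = (π / Real.sqrt (a*b)) * Real.log
        (((Real.sqrt (a*b) + Real.sqrt ((t+a)*(t+b)))^2 - t^2) / (Real.sqrt a + Real.sqrt b)^2)
      - (π / Real.sqrt (a*b)) * Real.log
        (((Real.sqrt (a*b) + Real.sqrt ((0+a)*(0+b)))^2 - 0^2) / (Real.sqrt a + Real.sqrt b)^2) := by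
  have hb : 0 < b := ha.trans hab
  set m : ℝ := (a+b)/2 with hmdef
  set r : ℝ := (b-a)/2 with hrdef
  have hr : 0 < r := by rw [hrdef]; linarith
  have hrm : r < m := by rw [hrdef, hmdef]; linarith
  have hxmem : ∀ θ : ℝ, a ≤ m + r * Real.sin θ ∧ m + r * Real.sin θ ≤ b := by
    intro θ
    constructor <;> [nlinarith [Real.neg_one_le_sin θ]; nlinarith [Real.sin_le_one θ]]
  have hxpos : ∀ θ : ℝ, 0 < m + r * Real.sin θ := fun θ => lt_of_lt_of_le ha (hxmem θ).1
  have hS : 0 < Real.sqrt (a*b) := Real.sqrt_pos.mpr (by positivity)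
  set S : ℝ := Real.sqrt (a*b) with hSdef
  have hS2 : S^2 = a*b := Real.sq_sqrt (by positivity)
  have hQ : ∀ s : ℝ, 0 ≤ s → 0 < Real.sqrt ((s+a)*(s+b)) :=
    fun s hs => Real.sqrt_pos.mpr (by nlinarith)
  have hQ2 : ∀ s : ℝ, 0 ≤ s → (Real.sqrt ((s+a)*(s+b)))^2 = (s+a)*(s+b) :=
    fun s hs => Real.sq_sqrt (by nlinarith)
  -- step 1: difference of integrals
  have hcont1 : Continuous (fun θ => Real.log (m + r * Real.sin θ + t) / (m + r * Real.sin θ)) := by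
    apply Continuous.div
    · apply Continuous.log (by fun_prop)
      intro θ; nlinarith [hxpos θ]
    · fun_prop
    · intro θ; exact (hxpos θ).ne'
  have hcont0 : Continuous (fun θ => Real.log (m + r * Real.sin θ) / (m + r * Real.sin θ)) := by
    apply Continuous.div
    · exact Continuous.log (by fun_prop) (fun θ => (hxpos θ).ne')
    · fun_prop
    · intro θ; exact (hxpos θ).ne'
  have step1 : (∫ θ in Set.Ioo (-(π/2)) (π/2),
        Real.log (m + r * Real.sin θ + t) / (m + r * Real.sin θ))
      - (∫ θ in Set.Ioo (-(π/2)) (π/2),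
        Real.log (m + r * Real.sin θ) / (m + r * Real.sin θ))
      = ∫ θ in Set.Ioo (-(π/2)) (π/2), ∫ s in Set.Ioo 0 t,
          (m + r * Real.sin θ + s)⁻¹ * (m + r * Real.sin θ)⁻¹ := by
    rw [← MeasureTheory.integral_sub (integrableOn_Ioo_of_continuous hcont1)
      (integrableOn_Ioo_of_continuous hcont0)]
    apply MeasureTheory.setIntegral_congr_fun measurableSet_Ioo
    intro θ _
    have hlog : Real.log (m + r * Real.sin θ + t) - Real.log (m + r * Real.sin θ)
        = ∫ s in Set.Ioo 0 t, ((m + r * Real.sin θ) + s)⁻¹ := by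
      have := logInt (m + r * Real.sin θ) 1 t ht
        (fun s hs => by nlinarith [hxpos θ, hs.1])
      simp only [mul_one, one_mul] at this
      exact this
    show Real.log (m + r * Real.sin θ + t) / (m + r * Real.sin θ)
        - Real.log (m + r * Real.sin θ) / (m + r * Real.sin θ) = _
    rw [div_sub_div_same, div_eq_mul_inv, hlog, ← MeasureTheory.integral_mul_const]
  -- step 2: swap
  have step2 : (∫ θ in Set.Ioo (-(π/2)) (π/2), ∫ s in Set.Ioo 0 t,
        (m + r * Real.sin θ + s)⁻¹ * (m + r * Real.sin θ)⁻¹)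
      = ∫ s in Set.Ioo 0 t, ∫ θ in Set.Ioo (-(π/2)) (π/2),
        (m + r * Real.sin θ + s)⁻¹ * (m + r * Real.sin θ)⁻¹ := by
    refine swapHelper _ _ _ _ _ ?_ (a⁻¹ * a⁻¹) ?_
    · show Measurable (fun p : ℝ × ℝ => (m + r * Real.sin p.1 + p.2)⁻¹ * (m + r * Real.sin p.1)⁻¹)
      exact ((measurable_const.add ((Real.measurable_sin.comp measurable_fst).const_mul r)).add
        measurable_snd).inv.mul
        (measurable_const.add ((Real.measurable_sin.comp measurable_fst).const_mul r)).inv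
    · intro θ _ s hs
      have h1 : a ≤ m + r * Real.sin θ := (hxmem θ).1
      have h2 : a ≤ m + r * Real.sin θ + s := by nlinarith [hs.1]
      rw [abs_mul, abs_inv, abs_inv, abs_of_pos (by linarith), abs_of_pos (hxpos θ)]
      exact mul_le_mul (inv_anti₀ ha h2) (inv_anti₀ ha h1)
        (inv_nonneg.mpr (hxpos θ).le) (by positivity)
  -- step 3: inner integral
  have step3 : ∀ s ∈ Set.Ioo (0:ℝ) t,
      (∫ θ in Set.Ioo (-(π/2)) (π/2),
        (m + r * Real.sin θ + s)⁻¹ * (m + r * Real.sin θ)⁻¹)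
      = π * (s+a+b) / (S * Real.sqrt ((s+a)*(s+b)) * (Real.sqrt ((s+a)*(s+b)) + S)) := by
    intro s hs
    have hs0 : 0 < s := hs.1
    set Q : ℝ := Real.sqrt ((s+a)*(s+b)) with hQdef
    have hQs : 0 < Q := hQ s hs0.le
    have hQs2 : Q^2 = (s+a)*(s+b) := hQ2 s hs0.le
    have hcongr : ∀ θ ∈ Set.Ioo (-(π/2)) (π/2),
        (m + r * Real.sin θ + s)⁻¹ * (m + r * Real.sin θ)⁻¹
        = s⁻¹ * ((m + r * Real.sin θ)⁻¹ - ((m+s) + r * Real.sin θ)⁻¹) := by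
      intro θ _
      have h1 := hxpos θ
      have h2 : 0 < (m+s) + r * Real.sin θ := by nlinarith
      have h3 : m + r * Real.sin θ + s = (m+s) + r * Real.sin θ := by ring
      rw [h3]
      field_simp
      ring
    rw [MeasureTheory.setIntegral_congr_fun measurableSet_Ioo hcongr]
    rw [MeasureTheory.integral_const_mul]
    rw [MeasureTheory.integral_sub]
    · rw [intA m r hr.le hrm, intA (m+s) r hr.le (by linarith)]
      have e1 : m^2 - r^2 = a*b := by rw [hmdef, hrdef]; ring
      have e2 : (m+s)^2 - r^2 = (s+a)*(s+b) := by rw [hmdef, hrdef]; ring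
      rw [e1, e2, ← hSdef, ← hQdef]
      have hne1 : S ≠ 0 := hS.ne'
      have hne2 : Q ≠ 0 := hQs.ne'
      have hne3 : Q + S ≠ 0 := by positivity
      field_simp
      linear_combination hQs2 - hS2
    · apply integrableOn_Ioo_of_continuous
      exact Continuous.inv₀ (by fun_prop) (fun θ => (hxpos θ).ne')
    · apply integrableOn_Ioo_of_continuous
      refine Continuous.inv₀ (by fun_prop) (fun θ => ?_)
      have := hxpos θ; nlinarith
  rw [MeasureTheory.setIntegral_congr_fun measurableSet_Ioo step3] at step2
  -- step 4: FTC
  have hW : ∀ s ∈ Set.uIcc 0 t, HasDerivAt (fun s => (π/S) * Real.log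
      (((S + Real.sqrt ((s+a)*(s+b)))^2 - s^2) / (Real.sqrt a + Real.sqrt b)^2))
      (π * (s+a+b) / (S * Real.sqrt ((s+a)*(s+b)) * (Real.sqrt ((s+a)*(s+b)) + S))) s := by
    intro s hsI
    rw [Set.uIcc_of_le ht] at hsI
    obtain ⟨hs0, hst⟩ := hsI
    set Q : ℝ := Real.sqrt ((s+a)*(s+b)) with hQdef
    have hQs : 0 < Q := hQ s hs0
    have hQs2 : Q^2 = (s+a)*(s+b) := hQ2 s hs0
    have hpoly : HasDerivAt (fun s : ℝ => (s+a)*(s+b)) (2*s+a+b) s := by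
      have := ((hasDerivAt_id s).add_const a).mul ((hasDerivAt_id s).add_const b)
      refine this.congr_deriv ?_
      simp only [id_eq]
      ring
    have hQder : HasDerivAt (fun s : ℝ => Real.sqrt ((s+a)*(s+b)))
        (1 / (2 * Real.sqrt ((s+a)*(s+b))) * (2*s+a+b)) s :=
      (Real.hasDerivAt_sqrt (by nlinarith)).comp s hpoly
    have hu : HasDerivAt (fun s : ℝ => (S + Real.sqrt ((s+a)*(s+b)))^2 - s^2)
        (2 * (S + Real.sqrt ((s+a)*(s+b)))^1 * (1 / (2 * Real.sqrt ((s+a)*(s+b))) * (2*s+a+b))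
          - 2*s^1) s := by
      exact ((hQder.const_add S).pow 2).sub (hasDerivAt_pow 2 s)
    have hupos : 0 < (S + Real.sqrt ((s+a)*(s+b)))^2 - s^2 := by
      nlinarith [mul_pos hS hQs]
    have hCpos : (0:ℝ) < (Real.sqrt a + Real.sqrt b)^2 := by
      have := Real.sqrt_pos.mpr ha
      have := Real.sqrt_pos.mpr hb
      positivity
    have hdiv : HasDerivAt (fun s : ℝ =>
        ((S + Real.sqrt ((s+a)*(s+b)))^2 - s^2) / (Real.sqrt a + Real.sqrt b)^2)
        ((2 * (S + Real.sqrt ((s+a)*(s+b)))^1 * (1 / (2 * Real.sqrt ((s+a)*(s+b))) * (2*s+a+b))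
          - 2*s^1) / (Real.sqrt a + Real.sqrt b)^2) s := hu.div_const _
    have hlog := (Real.hasDerivAt_log (by positivity :
        (0:ℝ) < ((S + Real.sqrt ((s+a)*(s+b)))^2 - s^2) / (Real.sqrt a + Real.sqrt b)^2).ne').comp
        s hdiv
    have := hlog.const_mul (π/S)
    refine this.congr_deriv ?_
    have hne1 : S ≠ 0 := hS.ne'
    have hne2 : Q ≠ 0 := hQs.ne'
    have hne3 : Q + S ≠ 0 := by positivity
    have hne4 : (S + Q)^2 - s^2 ≠ 0 := hupos.ne'
    rw [← hQdef]
    field_simp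
    linear_combination s*hS2 - s*hQs2
  have hcontQ : Continuous (fun s : ℝ => Real.sqrt ((s+a)*(s+b))) := by
    apply Real.continuous_sqrt.comp
    fun_prop
  have hInt : IntervalIntegrable (fun s => π * (s+a+b) /
      (S * Real.sqrt ((s+a)*(s+b)) * (Real.sqrt ((s+a)*(s+b)) + S))) volume 0 t := by
    apply ContinuousOn.intervalIntegrable
    apply ContinuousOn.div (by fun_prop)
    · exact ((continuous_const.mul hcontQ).mul (hcontQ.add continuous_const)).continuousOn
    · intro s hsI
      rw [Set.uIcc_of_le ht] at hsI
      have hQs := hQ s hsI.1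
      positivity
  have hftc : (∫ s in Set.Ioo (0:ℝ) t, π * (s+a+b) /
      (S * Real.sqrt ((s+a)*(s+b)) * (Real.sqrt ((s+a)*(s+b)) + S)))
      = (π/S) * Real.log (((S + Real.sqrt ((t+a)*(t+b)))^2 - t^2) / (Real.sqrt a + Real.sqrt b)^2)
      - (π/S) * Real.log (((S + Real.sqrt ((0+a)*(0+b)))^2 - 0^2) / (Real.sqrt a + Real.sqrt b)^2) := by
    rw [← MeasureTheory.integral_Ioc_eq_integral_Ioo, ← intervalIntegral.integral_of_le ht]
    rw [intervalIntegral.integral_eq_sub_of_hasDerivAt hW hInt]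
  rw [step1, step2, hftc]


lemma sqrt_fact (a b : ℝ) (ha : 0 < a) (hab : a < b) (θ : ℝ) (hθ : θ ∈ Set.Ioo (-(π/2)) (π/2)) :
    Real.sqrt ((b - ((a+b)/2 + (b-a)/2 * Real.sin θ)) * (((a+b)/2 + (b-a)/2 * Real.sin θ) - a))
      = (b-a)/2 * Real.cos θ := by
  have hk : 0 < Real.cos θ := Real.cos_pos_of_mem_Ioo hθ
  have hsk : Real.sin θ^2 + Real.cos θ^2 = 1 := Real.sin_sq_add_cos_sq θ
  have h1 : (b - ((a+b)/2 + (b-a)/2 * Real.sin θ)) * (((a+b)/2 + (b-a)/2 * Real.sin θ) - a)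
      = ((b-a)/2 * Real.cos θ)^2 := by linear_combination (-((b-a)/2)^2) * hsk
  rw [h1, Real.sqrt_sq (mul_nonneg (by linarith) hk.le)]

lemma lemBase (a b : ℝ) (ha : 0 < a) (hab : a < b) :
    (∫ θ in Set.Ioo (-(π/2)) (π/2),
        Real.log ((a+b)/2 + (b-a)/2 * Real.sin θ) / ((a+b)/2 + (b-a)/2 * Real.sin θ))
      = (π / Real.sqrt (a*b)) * Real.log ((4*(a*b)) / (Real.sqrt a + Real.sqrt b)^2) := by
  have hb : 0 < b := ha.trans hab
  set m : ℝ := (a+b)/2 with hmdef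
  set r : ℝ := (b-a)/2 with hrdef
  have hr : 0 < r := by rw [hrdef]; linarith
  have hrm : r < m := by rw [hrdef, hmdef]; linarith
  have hma : m - r = a := by rw [hmdef, hrdef]; ring
  have hmb : m + r = b := by rw [hmdef, hrdef]; ring
  have hxmem : ∀ θ : ℝ, a ≤ m + r * Real.sin θ ∧ m + r * Real.sin θ ≤ b := by
    intro θ
    constructor <;> [nlinarith [Real.neg_one_le_sin θ]; nlinarith [Real.sin_le_one θ]]
  have hxpos : ∀ θ : ℝ, 0 < m + r * Real.sin θ := fun θ => lt_of_lt_of_le ha (hxmem θ).1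
  have hS : 0 < Real.sqrt (a*b) := Real.sqrt_pos.mpr (by positivity)
  set S : ℝ := Real.sqrt (a*b) with hSdef
  have hS2 : S^2 = a*b := Real.sq_sqrt (by positivity)
  -- step 1: θ-integral equals x-integral of g
  set g : ℝ → ℝ := fun x => Real.log x / (x * Real.sqrt ((b - x) * (x - a))) with hgdef
  have step1 : (∫ θ in Set.Ioo (-(π/2)) (π/2),
        Real.log (m + r * Real.sin θ) / (m + r * Real.sin θ))
      = ∫ x in Set.Ioo a b, g x := by
    rw [show (Set.Ioo a b) = Set.Ioo (m - r) (m + r) by rw [hma, hmb]]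
    rw [covSin m r hr g]
    apply MeasureTheory.setIntegral_congr_fun measurableSet_Ioo
    intro θ hθ
    have hk : 0 < Real.cos θ := Real.cos_pos_of_mem_Ioo hθ
    have hx := hxpos θ
    show Real.log (m + r * Real.sin θ) / (m + r * Real.sin θ)
        = (r * Real.cos θ) * g (m + r * Real.sin θ)
    rw [hgdef]
    simp only
    rw [show Real.sqrt ((b - (m + r * Real.sin θ)) * ((m + r * Real.sin θ) - a))
        = r * Real.cos θ from sqrt_fact a b ha hab θ hθ]
    field_simp
  -- step 2: x ↦ ab/x change of variables
  have step2 : (∫ x in Set.Ioo a b, g x)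
      = ∫ u in Set.Ioo a b, Real.log (a*b/u) / (S * Real.sqrt ((b - u) * (u - a))) := by
    rw [covInv a b ha hab g]
    apply MeasureTheory.setIntegral_congr_fun measurableSet_Ioo
    intro u hu
    have hu0 : 0 < u := ha.trans hu.1
    have hprod : 0 < (b - u) * (u - a) := mul_pos (by linarith [hu.2]) (by linarith [hu.1])
    have hsq : Real.sqrt ((b - a*b/u) * (a*b/u - a)) = S * Real.sqrt ((b - u) * (u - a)) / u := by
      have h1 : (b - a*b/u) * (a*b/u - a) = (a*b) * ((b - u) * (u - a)) / u^2 := by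
        field_simp
      rw [h1, show (a*b) * ((b - u) * (u - a)) / u^2
          = (S * Real.sqrt ((b - u) * (u - a)) / u)^2 by
        rw [div_pow, mul_pow, hS2, Real.sq_sqrt hprod.le]]
      exact Real.sqrt_sq (by positivity)
    rw [hgdef]
    simp only
    rw [hsq]
    have hsp : 0 < Real.sqrt ((b - u) * (u - a)) := Real.sqrt_pos.mpr hprod
    have habp : 0 < a * b / u := by positivity
    field_simp
  -- step 3: back to θ
  have step3 : (∫ u in Set.Ioo a b, Real.log (a*b/u) / (S * Real.sqrt ((b - u) * (u - a))))
      = ∫ θ in Set.Ioo (-(π/2)) (π/2), (Real.log (a*b) - Real.log (m + r * Real.sin θ)) / S := by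
    rw [show (Set.Ioo a b) = Set.Ioo (m - r) (m + r) by rw [hma, hmb]]
    rw [covSin m r hr _]
    apply MeasureTheory.setIntegral_congr_fun measurableSet_Ioo
    intro θ hθ
    have hk : 0 < Real.cos θ := Real.cos_pos_of_mem_Ioo hθ
    have hx := hxpos θ
    simp only
    rw [show Real.sqrt ((b - (m + r * Real.sin θ)) * ((m + r * Real.sin θ) - a))
        = r * Real.cos θ from sqrt_fact a b ha hab θ hθ]
    rw [Real.log_div (by positivity) hx.ne']
    field_simp
  -- step 4: evaluate
  have step4 : (∫ θ in Set.Ioo (-(π/2)) (π/2),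
        (Real.log (a*b) - Real.log (m + r * Real.sin θ)) / S)
      = (π * Real.log (a*b) - π * Real.log ((m + S)/2)) / S := by
    have hcontlog : Continuous (fun θ => Real.log (m + r * Real.sin θ)) :=
      Continuous.log (by fun_prop) (fun θ => (hxpos θ).ne')
    have h1 : (∫ θ in Set.Ioo (-(π/2)) (π/2),
        (Real.log (a*b) - Real.log (m + r * Real.sin θ)) / S)
        = (∫ θ in Set.Ioo (-(π/2)) (π/2),
          (Real.log (a*b) - Real.log (m + r * Real.sin θ))) / S := by
      simp_rw [div_eq_mul_inv]
      rw [MeasureTheory.integral_mul_const]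
    rw [h1]
    rw [MeasureTheory.integral_sub ((integrableOn_const_iff (C := Real.log (a*b))).mpr (Or.inr (by
      rw [Real.volume_Ioo]; exact ENNReal.ofReal_lt_top))) (integrableOn_Ioo_of_continuous hcontlog)]
    rw [MeasureTheory.setIntegral_const, smul_eq_mul, measureReal_def, volIoo]
    rw [lemN m r hr hrm]
    rw [show m^2 - r^2 = a*b by rw [hmdef, hrdef]; ring, ← hSdef]
  rw [step1, step2, step3, step4]
  -- final arithmetic
  have hsab : Real.sqrt a * Real.sqrt b = S := by
    rw [hSdef, Real.sqrt_mul ha.le]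
  have hsum : (Real.sqrt a + Real.sqrt b)^2 = 2*(m + S) := by
    have h1 : Real.sqrt a ^2 = a := Real.sq_sqrt ha.le
    have h2 : Real.sqrt b ^2 = b := Real.sq_sqrt hb.le
    rw [hmdef]
    nlinarith [hsab]
  have hmS : 0 < m + S := by positivity
  rw [hsum]
  rw [show (4*(a*b)) / (2*(m+S)) = (a*b) / ((m+S)/2) by
    rw [div_eq_div_iff (by positivity) (by positivity)]; ring]
  have h3 : Real.log ((a*b)/((m+S)/2)) = Real.log (a*b) - Real.log ((m+S)/2) :=
    Real.log_div (by positivity) (by positivity)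
  rw [h3]
  ring


theorem integral_log_add_t_div_x_sqrt
    (a b t : ℝ) (ha : 0 < a) (hab : a < b) (ht : 0 ≤ t) :
    (∫ x in a..b, Real.log (x + t) / (x * Real.sqrt ((b - x) * (x - a))))
      = (Real.pi / Real.sqrt (a * b))
          * Real.log
              (((Real.sqrt (a * b) + Real.sqrt ((t + a) * (t + b))) ^ 2 - t ^ 2)
                / (Real.sqrt a + Real.sqrt b) ^ 2) := by
  have hb : 0 < b := ha.trans hab
  have hr : 0 < (b-a)/2 := by linarith
  have hxpos : ∀ θ : ℝ, 0 < (a+b)/2 + (b-a)/2 * Real.sin θ := by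
    intro θ
    nlinarith [Real.neg_one_le_sin θ]
  rw [intervalIntegral.integral_of_le hab.le, MeasureTheory.integral_Ioc_eq_integral_Ioo]
  have hcov : (∫ x in Set.Ioo a b, Real.log (x + t) / (x * Real.sqrt ((b - x) * (x - a))))
      = ∫ θ in Set.Ioo (-(π/2)) (π/2),
          Real.log ((a+b)/2 + (b-a)/2 * Real.sin θ + t) / ((a+b)/2 + (b-a)/2 * Real.sin θ) := by
    rw [show Set.Ioo a b = Set.Ioo ((a+b)/2 - (b-a)/2) ((a+b)/2 + (b-a)/2) by
      rw [show (a+b)/2 - (b-a)/2 = a by ring, show (a+b)/2 + (b-a)/2 = b by ring]]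
    rw [covSin ((a+b)/2) ((b-a)/2) hr (fun x => Real.log (x + t) / (x * Real.sqrt ((b - x) * (x - a))))]
    apply MeasureTheory.setIntegral_congr_fun measurableSet_Ioo
    intro θ hθ
    have hk : 0 < Real.cos θ := Real.cos_pos_of_mem_Ioo hθ
    have hx := hxpos θ
    simp only
    rw [sqrt_fact a b ha hab θ hθ]
    have h2 : ((b-a)/2 * Real.cos θ) ≠ 0 := ne_of_gt (mul_pos hr hk)
    rw [← div_div, mul_comm, div_mul_cancel₀ _ h2]
  rw [hcov]
  have hP := lemP a b t ha hab ht
  have hB := lemBase a b ha hab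
  have e : ((Real.sqrt (a*b) + Real.sqrt ((0+a)*(0+b)))^2 - 0^2) = 4*(a*b) := by
    rw [show (0:ℝ)+a = a by ring, show (0:ℝ)+b = b by ring]
    have h := Real.sq_sqrt (mul_nonneg ha.le hb.le)
    nlinarith [h]
  rw [e] at hP
  linarith [hP, hB]
end

section
/- Let 0 < a < b and let t > −a be a real number. Then ∫_a^b dx / ( (x + t) √((b−x)(x−a)) ) = π / √((t+a)(t+b)). -/
open Real MeasureTheory intervalIntegral

theorem integral_inv_add_t_sqrt
    (a b t : ℝ) (ha : 0 < a) (hab : a < b) (ht : -a < t) :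
    (∫ x in a..b, 1 / ((x + t) * Real.sqrt ((b - x) * (x - a))))
      = Real.pi / Real.sqrt ((t + a) * (t + b)) := by
  have hta : (0:ℝ) < t + a := by linarith
  have htb : (0:ℝ) < t + b := by linarith
  have hD : (0:ℝ) < (t + a) * (t + b) := mul_pos hta htb
  have hba : (0:ℝ) < b - a := by linarith
  set D : ℝ := (t + a) * (t + b) with hDdef
  have hsD : (0:ℝ) < Real.sqrt D := Real.sqrt_pos.mpr hD
  set g : ℝ → ℝ := fun x => ((2*t+a+b)*x - (a+b)*t - 2*a*b) / ((b-a)*(x+t)) with hg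
  set F : ℝ → ℝ := fun x => (1 / Real.sqrt D) * Real.arcsin (g x) with hF
  set f : ℝ → ℝ := fun x => 1 / ((x + t) * Real.sqrt ((b - x) * (x - a))) with hf
  have hcont : ContinuousOn F (Set.Icc a b) := by
    apply ContinuousOn.mul continuousOn_const
    apply Real.continuous_arcsin.comp_continuousOn
    apply ContinuousOn.div (by fun_prop) (by fun_prop)
    intro x hx
    have hxa := hx.1
    have : (0:ℝ) < x + t := by linarith
    positivity
  have hderiv : ∀ x ∈ Set.Ioo a b, HasDerivAt F (f x) x := by
    intro x hx
    obtain ⟨hx1, hx2⟩ := hx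
    have hxt : (0:ℝ) < x + t := by linarith
    have hbx : (0:ℝ) < b - x := by linarith
    have hxa : (0:ℝ) < x - a := by linarith
    have hprod : (0:ℝ) < (b - x) * (x - a) := mul_pos hbx hxa
    have hsp : (0:ℝ) < Real.sqrt ((b - x) * (x - a)) := Real.sqrt_pos.mpr hprod
    have hden : (b-a)*(x+t) ≠ 0 := by positivity
    -- 1 - g x ^ 2
    have h1mg : 1 - g x ^ 2 = 4 * D * ((b-x)*(x-a)) / ((b-a)*(x+t))^2 := by
      rw [hg]
      field_simp
      ring
    have h1mgpos : 0 < 1 - g x ^ 2 := by rw [h1mg]; positivity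
    have hgne1 : g x ≠ 1 := by nlinarith [h1mgpos]
    have hgnem1 : g x ≠ -1 := by nlinarith [h1mgpos]
    -- derivative of g
    have hgd : HasDerivAt g (2 * D / ((b-a)*(x+t)^2)) x := by
      have h1 : HasDerivAt (fun x : ℝ => (2*t+a+b)*x - (a+b)*t - 2*a*b) (2*t+a+b) x := by
        simpa using ((((hasDerivAt_id x).const_mul (2*t+a+b)).sub_const ((a+b)*t)).sub_const (2*a*b))
      have h2 : HasDerivAt (fun x : ℝ => (b-a)*(x+t)) (b-a) x := by
        simpa using ((hasDerivAt_id x).add_const t).const_mul (b-a)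
      have := h1.div h2 hden
      refine this.congr_deriv ?_
      symm
      field_simp
      ring
    have harc : HasDerivAt (fun x => Real.arcsin (g x))
        (1 / Real.sqrt (1 - g x ^ 2) * (2 * D / ((b-a)*(x+t)^2))) x :=
      (Real.hasDerivAt_arcsin hgnem1 hgne1).comp x hgd
    have hFd := harc.const_mul (1 / Real.sqrt D)
    refine hFd.congr_deriv ?_
    symm
    -- compute sqrt (1 - g x ^ 2)
    have hsqD : Real.sqrt D ^ 2 = D := Real.sq_sqrt hD.le
    have hsqp : Real.sqrt ((b-x)*(x-a)) ^ 2 = (b-x)*(x-a) := Real.sq_sqrt hprod.le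
    have key : (2 * Real.sqrt D * Real.sqrt ((b-x)*(x-a)) / ((b-a)*(x+t)))^2
        = 4 * D * ((b-x)*(x-a)) / ((b-a)*(x+t))^2 := by
      rw [div_pow, show (2 * Real.sqrt D * Real.sqrt ((b-x)*(x-a)))^2
          = 4 * (Real.sqrt D ^ 2) * (Real.sqrt ((b-x)*(x-a)) ^ 2) by ring, hsqD, hsqp]
    have hsq : Real.sqrt (1 - g x ^ 2)
        = 2 * Real.sqrt D * Real.sqrt ((b-x)*(x-a)) / ((b-a)*(x+t)) := by
      rw [h1mg, ← key]
      exact Real.sqrt_sq (by positivity)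
    rw [hf, hsq]
    beta_reduce
    have hDD : Real.sqrt D * Real.sqrt D = D := Real.mul_self_sqrt hD.le
    have hbane : (b - a) ≠ 0 := ne_of_gt hba
    have hxtne : (x + t) ≠ 0 := ne_of_gt hxt
    have hspne : Real.sqrt ((b-x)*(x-a)) ≠ 0 := ne_of_gt hsp
    have hsDne : Real.sqrt D ≠ 0 := ne_of_gt hsD
    rw [Real.sqrt_mul hbx.le] at *
    field_simp
    linear_combination hDD
  have hnonneg : ∀ x ∈ Set.Ioo a b, 0 ≤ f x := by
    intro x hx
    have hxt : (0:ℝ) < x + t := by linarith [hx.1]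
    have : (0:ℝ) ≤ Real.sqrt ((b - x) * (x - a)) := Real.sqrt_nonneg _
    rw [hf]
    positivity
  have hint : IntervalIntegrable f volume a b := by
    apply intervalIntegrable_deriv_of_nonneg (g := F)
    · rwa [Set.uIcc_of_le hab.le]
    · rwa [min_eq_left hab.le, max_eq_right hab.le]
    · rwa [min_eq_left hab.le, max_eq_right hab.le]
  rw [show (∫ x in a..b, 1 / ((x + t) * Real.sqrt ((b - x) * (x - a)))) = ∫ x in a..b, f x from rfl,
    intervalIntegral.integral_eq_sub_of_hasDeriv_right_of_le hab.le hcont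
      (fun x hx => (hderiv x hx).hasDerivWithinAt) hint]
  have hga : g a = -1 := by
    rw [hg]
    have h1 : (b-a) ≠ 0 := by positivity
    have h2 : a + t ≠ 0 := by linarith
    field_simp
    ring
  have hgb : g b = 1 := by
    rw [hg]
    have h1 : (b-a) ≠ 0 := by positivity
    have h2 : b + t ≠ 0 := by linarith
    field_simp
    ring
  rw [hF]
  simp only [hga, hgb, Real.arcsin_one, Real.arcsin_neg_one]
  field_simp
  ring
end
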